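/- arXiv:1805.12236 — 9 statements merged into one kernel-verified Lean document; each statement's English description precedes it below -/
import Mathlib

section
/- Let S be a commutative ring, x ∈ S, R = S/(x), and (F̃, d̃) a lifting to free S-modules of a complex (F, d) of free R-modules. Then there exist S-linear maps ψ̃_i : F̃_i → F̃_{i-2} such that x·ψ̃_i = d̃_{i-1} ∘ d̃_i for all i. -/
/-- Let `S` be a commutative ring, `x ∈ S`, `R = S/(x)`, and `(F̃, d̃)` a lifting to free
`S`-modules of a chain complex of free `R`-modules (the reduction of `d̃` mod `x` squares
to zero).  Then there exist `S`-linear maps `ψ̃ᵢ : F̃ᵢ → F̃_{i-2}` with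
`x·ψ̃ᵢ = d̃_{i-1} ∘ d̃ᵢ` for all `i`. -/
theorem exists_psi_lifting {S : Type*} [CommRing S] (x : S)
    (F : ℤ → Type*) [∀ i, AddCommGroup (F i)] [∀ i, Module S (F i)]
    [∀ i, Module.Free S (F i)]
    (d : ∀ i : ℤ, F (i + 1) →ₗ[S] F i)
    (hcomplex : ∀ (i : ℤ) (v : F (i + 1 + 1)),
      (Ideal.span {x} • ⊤ : Submodule S (F i)).mkQ (d i (d (i + 1) v)) = 0) :
    ∃ ψ : ∀ i : ℤ, F (i + 1 + 1) →ₗ[S] F i,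
      ∀ (i : ℤ) (v : F (i + 1 + 1)), x • ψ i v = d i (d (i + 1) v) := by
  have key : ∀ (i : ℤ) (v : F (i + 1 + 1)), ∃ m : F i, x • m = d i (d (i + 1) v) := by
    intro i v
    have h := hcomplex i v
    rw [Submodule.mkQ_apply, Submodule.Quotient.mk_eq_zero,
      Submodule.ideal_span_singleton_smul, ← SetLike.mem_coe,
      Submodule.coe_pointwise_smul, Set.mem_smul_set] at h
    obtain ⟨m, -, hm⟩ := h
    exact ⟨m, hm⟩
  refine ⟨fun i => (Module.Free.chooseBasis S (F (i + 1 + 1))).constr S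
      (fun j => (key i ((Module.Free.chooseBasis S (F (i + 1 + 1))) j)).choose), ?_⟩
  intro i v
  have heq : (x • ((Module.Free.chooseBasis S (F (i + 1 + 1))).constr S
      (fun j => (key i ((Module.Free.chooseBasis S (F (i + 1 + 1))) j)).choose)) :
      F (i + 1 + 1) →ₗ[S] F i) = (d i).comp (d (i + 1)) := by
    apply Module.Basis.ext (Module.Free.chooseBasis S (F (i + 1 + 1)))
    intro j
    simp only [LinearMap.smul_apply, Module.Basis.constr_basis, LinearMap.comp_apply]
    exact (key i _).choose_spec
  calc x • _ = (x • ((Module.Free.chooseBasis S (F (i + 1 + 1))).constr S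
      (fun j => (key i ((Module.Free.chooseBasis S (F (i + 1 + 1))) j)).choose)) :
      F (i + 1 + 1) →ₗ[S] F i) v := rfl
    _ = d i (d (i + 1) v) := by rw [heq]; rfl
end

section
/- Let (x,y) be an exact pair of zero divisors in a commutative ring S, R = S/(x), (F̃, d̃) a lifting of a complex of free R-modules, and ψ̃ with x·ψ̃ = d̃². Then there exist S-linear maps φ̃_i : F̃_i → F̃_{i-3} such that d̃ψ̃ − ψ̃d̃ = y·φ̃. -/
/-- `(x, y)` is an exact pair of zero divisors in `S`:
`ann_S(x) = (y)` and `ann_S(y) = (x)`. -/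
def IsExactZeroDivisorPair {S : Type*} [CommRing S] (x y : S) : Prop :=
  (Ideal.span {x} : Ideal S).annihilator = Ideal.span {y} ∧
    (Ideal.span {y} : Ideal S).annihilator = Ideal.span {x}

/-- If `ann(x) = (y)` then any element of a free module killed by `x` is a multiple of `y`. -/
lemma exists_smul_of_annihilated {S : Type*} [CommRing S] {x y : S}
    (h : (Ideal.span {x} : Ideal S).annihilator = Ideal.span {y})
    {M : Type*} [AddCommGroup M] [Module S M] [Module.Free S M]
    (w : M) (hw : x • w = 0) : ∃ w' : M, w = y • w' := by
  classical
  let C := Module.Free.chooseBasis S M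
  have hcoord : ∀ j, ∃ a : S, C.repr w j = y * a := by
    intro j
    have hx : x * C.repr w j = 0 := by
      have : C.repr (x • w) j = 0 := by rw [hw]; simp
      simpa [Finsupp.smul_apply, smul_eq_mul] using this
    have hmem : C.repr w j ∈ (Ideal.span {x} : Ideal S).annihilator := by
      rw [Submodule.mem_annihilator]
      intro m hm
      rw [Ideal.mem_span_singleton] at hm
      obtain ⟨c, rfl⟩ := hm
      rw [smul_eq_mul]
      ring_nf
      rw [mul_comm (C.repr w j) x, hx, zero_mul]
    rw [h, Ideal.mem_span_singleton] at hmem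
    obtain ⟨a, ha⟩ := hmem
    exact ⟨a, ha⟩
  choose a ha using hcoord
  refine ⟨(C.repr w).sum fun j _ => a j • C j, ?_⟩
  rw [Finsupp.smul_sum]
  conv_lhs => rw [← C.linearCombination_repr w]
  rw [Finsupp.linearCombination_apply, Finsupp.sum, Finsupp.sum]
  refine Finset.sum_congr rfl fun j _ => ?_
  rw [ha j, mul_smul]

/-- Let `(x,y)` be an exact pair of zero divisors in `S`, `R = S/(x)`, `(F̃, d̃)` a lifting
of a complex of free `R`-modules, and `ψ̃` with `x·ψ̃ = d̃²`.  Then there exist `S`-linear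
maps `φ̃ᵢ : F̃ᵢ → F̃_{i-3}` with `d̃ψ̃ − ψ̃d̃ = y·φ̃`. -/
theorem exists_phi_lifting {S : Type*} [CommRing S] {x y : S}
    (hxy : IsExactZeroDivisorPair x y)
    (F : ℤ → Type*) [∀ i, AddCommGroup (F i)] [∀ i, Module S (F i)]
    [∀ i, Module.Free S (F i)]
    (d : ∀ i : ℤ, F (i + 1) →ₗ[S] F i)
    (ψ : ∀ i : ℤ, F (i + 1 + 1) →ₗ[S] F i)
    (hψ : ∀ (i : ℤ) (v : F (i + 1 + 1)), x • ψ i v = d i (d (i + 1) v)) :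
    ∃ φ : ∀ i : ℤ, F (i + 1 + 1 + 1) →ₗ[S] F i,
      ∀ (i : ℤ) (v : F (i + 1 + 1 + 1)),
        d i (ψ (i + 1) v) - ψ i (d (i + 1 + 1) v) = y • φ i v := by
  classical
  set θ : ∀ i : ℤ, F (i + 1 + 1 + 1) →ₗ[S] F i :=
    fun i => d i ∘ₗ ψ (i + 1) - ψ i ∘ₗ d (i + 1 + 1) with hθ
  have hxθ : ∀ (i : ℤ) (v : F (i + 1 + 1 + 1)), x • θ i v = 0 := by
    intro i v
    simp only [hθ, LinearMap.sub_apply, LinearMap.comp_apply, smul_sub]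
    rw [← map_smul, hψ (i + 1) v, hψ i (d (i + 1 + 1) v), sub_self]
  have key : ∀ i : ℤ, ∃ φi : F (i + 1 + 1 + 1) →ₗ[S] F i,
      ∀ v, θ i v = y • φi v := by
    intro i
    let B := Module.Free.chooseBasis S (F (i + 1 + 1 + 1))
    have hb : ∀ j, ∃ w' : F i, θ i (B j) = y • w' := fun j =>
      exists_smul_of_annihilated hxy.1 _ (hxθ i (B j))
    choose g hg using hb
    refine ⟨B.constr S g, ?_⟩
    have : θ i = y • B.constr S g := by
      apply B.ext
      intro j
      rw [hg j, LinearMap.smul_apply, B.constr_basis]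
    intro v; rw [this]; rfl
  choose φ hφ using key
  exact ⟨φ, fun i v => hφ i v⟩
end

section
/- Let (x,y) be an exact pair of zero divisors in a commutative ring S, R = S/(x), F a complex of free R-modules with lifting (F̃, d̃), ψ̃ with x·ψ̃ = d̃², and z ∈ ann_R(ȳ). Then ψ_z := z·(ψ̃ ⊗_S R) is a chain map F → F of homological degree −2, i.e. d∘ψ_z = ψ_z∘d. -/

lemma psi_aux {S : Type*} [CommRing S] {x y z : S}
    (hxy : IsExactZeroDivisorPair x y)
    (hz : z * y ∈ (Ideal.span {x} : Ideal S))
    {M : Type*} [AddCommGroup M] [Module S M] [Module.Free S M]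
    (w : M) (hw : x • w = 0) :
    z • w ∈ (Ideal.span {x} • ⊤ : Submodule S M) := by
  classical
  let b := Module.Free.chooseBasis S M
  have hcoord : ∀ j, x * b.repr w j = 0 := by
    intro j
    have := congrArg (fun u => b.repr u j) hw
    simpa using this
  have hmem : ∀ j, b.repr w j ∈ (Ideal.span {y} : Ideal S) := by
    intro j
    rw [← hxy.1]
    exact (Submodule.mem_annihilator_span_singleton x _).mpr
      (by simpa [smul_eq_mul, mul_comm] using hcoord j)
  have hw' : w = Finsupp.sum (b.repr w) fun j c => c • b j := (b.linearCombination_repr w).symm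
  rw [hw', Finsupp.smul_sum]
  refine Submodule.sum_mem _ fun j hj => ?_
  dsimp only
  rw [smul_smul]
  have : z * b.repr w j ∈ (Ideal.span {x} : Ideal S) := by
    obtain ⟨t, ht⟩ := Ideal.mem_span_singleton'.mp (hmem j)
    have : z * b.repr w j = t * (z * y) := by rw [← ht]; ring
    rw [this]
    exact Ideal.mul_mem_left _ _ hz
  exact Submodule.smul_mem_smul this trivial

/-- Let `(x,y)` be an exact pair of zero divisors in `S`, `R = S/(x)`, `F` a complex of free
`R`-modules with lifting `(F̃, d̃)` (the reduced complex being `F̃ᵢ/x·F̃ᵢ`), `ψ̃` with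
`x·ψ̃ = d̃²`, and `z` a representative of an element of `ann_R(ȳ)` (i.e. `z·y ∈ (x)`).
Then `ψ_z := z·(ψ̃ ⊗_S R)` is a chain map of homological degree `−2` on the reduced
complex: `d ∘ ψ_z = ψ_z ∘ d`. -/
theorem psi_z_is_chain_map {S : Type*} [CommRing S] {x y : S}
    (hxy : IsExactZeroDivisorPair x y)
    (F : ℤ → Type*) [∀ i, AddCommGroup (F i)] [∀ i, Module S (F i)]
    [∀ i, Module.Free S (F i)]
    (d : ∀ i : ℤ, F (i + 1) →ₗ[S] F i)
    (hcomplex : ∀ (i : ℤ) (v : F (i + 1 + 1)),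
      (Ideal.span {x} • ⊤ : Submodule S (F i)).mkQ (d i (d (i + 1) v)) = 0)
    (ψ : ∀ i : ℤ, F (i + 1 + 1) →ₗ[S] F i)
    (hψ : ∀ (i : ℤ) (v : F (i + 1 + 1)), x • ψ i v = d i (d (i + 1) v))
    (z : S) (hz : z * y ∈ (Ideal.span {x} : Ideal S)) :
    ∀ (i : ℤ) (v : F (i + 1 + 1 + 1)),
      (Ideal.span {x} • ⊤ : Submodule S (F i)).mkQ (z • d i (ψ (i + 1) v)) =
        (Ideal.span {x} • ⊤ : Submodule S (F i)).mkQ (z • ψ i (d (i + 1 + 1) v)) := by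
  intro i v
  rw [← sub_eq_zero, ← map_sub, ← smul_sub]
  have hw : x • (d i (ψ (i + 1) v) - ψ i (d (i + 1 + 1) v)) = 0 := by
    rw [smul_sub, hψ i, ← map_smul, hψ (i + 1), sub_self]
  rw [Submodule.mkQ_apply, Submodule.Quotient.mk_eq_zero]
  exact psi_aux hxy hz _ hw
end

section
/- Let (x,y) be an exact pair of zero divisors in a commutative ring S, R = S/(x), with lifting (F̃, d̃) of a free R-complex, ψ̃ with x·ψ̃ = d̃², and φ̃ with d̃ψ̃ − ψ̃d̃ = y·φ̃. Then y·(d̃φ̃ + φ̃d̃) = 0, and consequently there exists ρ̃ of degree −4 with d̃φ̃ + φ̃d̃ = x·ρ̃; hence φ := φ̃ ⊗_S R satisfies dφ + φd = 0 and is (up to the appropriate sign convention) a degree −3 chain map on F. -/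
private lemma exists_smul_of_smul_eq_zero {S : Type*} [CommRing S] {x y : S}
    (h : (Ideal.span {y} : Ideal S).annihilator = Ideal.span {x})
    {M : Type*} [AddCommGroup M] [Module S M] [Module.Free S M]
    (m : M) (hm : y • m = 0) : ∃ m', m = x • m' := by
  classical
  set b := Module.Free.chooseBasis S M with hb
  have hc : ∀ j, ∃ a, b.repr m j = x * a := by
    intro j
    have hy : y * b.repr m j = 0 := by
      have := congrArg (fun z => b.repr z j) hm
      simpa [map_smul, Finsupp.smul_apply, smul_eq_mul] using this
    have hmem : b.repr m j ∈ (Ideal.span {y} : Ideal S).annihilator :=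
      (Submodule.mem_annihilator_span_singleton y _).2
        (by simpa [smul_eq_mul, mul_comm] using hy)
    rw [h, Ideal.mem_span_singleton] at hmem
    exact hmem
  refine ⟨∑ j ∈ (b.repr m).support, (Classical.choose (hc j)) • b j, ?_⟩
  rw [Finset.smul_sum]
  have hmrepr : m = ∑ j ∈ (b.repr m).support, (b.repr m j) • b j := by
    conv_lhs => rw [← Module.Basis.linearCombination_repr b m]
    rw [Finsupp.linearCombination_apply, Finsupp.sum]
  rw [Finset.sum_congr rfl (fun j _ => by
    rw [smul_smul, ← Classical.choose_spec (hc j)] :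
    ∀ j ∈ (b.repr m).support, x • Classical.choose (hc j) • b j = (b.repr m j) • b j)]
  exact hmrepr

/-- Let `(x,y)` be an exact pair of zero divisors in `S`, `R = S/(x)`, `(F̃, d̃)` a lifting
of a free `R`-complex, `ψ̃` with `x·ψ̃ = d̃²`, and `φ̃` with `d̃ψ̃ − ψ̃d̃ = y·φ̃`.  Then
`y·(d̃φ̃ + φ̃d̃) = 0`, there exists `ρ̃` of degree `−4` with `d̃φ̃ + φ̃d̃ = x·ρ̃`, and hence
the reduction `φ := φ̃ ⊗_S R` satisfies `dφ + φd = 0`, i.e. `φ` is a degree `−3` chain map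
on the reduced complex. -/
theorem phi_is_chain_map {S : Type*} [CommRing S] {x y : S}
    (hxy : IsExactZeroDivisorPair x y)
    (F : ℤ → Type*) [∀ i, AddCommGroup (F i)] [∀ i, Module S (F i)]
    [∀ i, Module.Free S (F i)]
    (d : ∀ i : ℤ, F (i + 1) →ₗ[S] F i)
    (ψ : ∀ i : ℤ, F (i + 1 + 1) →ₗ[S] F i)
    (hψ : ∀ (i : ℤ) (v : F (i + 1 + 1)), x • ψ i v = d i (d (i + 1) v))
    (φ : ∀ i : ℤ, F (i + 1 + 1 + 1) →ₗ[S] F i)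
    (hφ : ∀ (i : ℤ) (v : F (i + 1 + 1 + 1)),
      d i (ψ (i + 1) v) - ψ i (d (i + 1 + 1) v) = y • φ i v) :
    (∀ (i : ℤ) (v : F (i + 1 + 1 + 1 + 1)),
        y • (d i (φ (i + 1) v) + φ i (d (i + 1 + 1 + 1) v)) = 0) ∧
    (∃ ρ : ∀ i : ℤ, F (i + 1 + 1 + 1 + 1) →ₗ[S] F i,
        ∀ (i : ℤ) (v : F (i + 1 + 1 + 1 + 1)),
          d i (φ (i + 1) v) + φ i (d (i + 1 + 1 + 1) v) = x • ρ i v) ∧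
    (∀ (i : ℤ) (v : F (i + 1 + 1 + 1 + 1)),
        (Ideal.span {x} • ⊤ : Submodule S (F i)).mkQ
          (d i (φ (i + 1) v) + φ i (d (i + 1 + 1 + 1) v)) = 0) := by
  obtain ⟨_, hann⟩ := hxy
  have key : ∀ (i : ℤ) (v : F (i + 1 + 1 + 1 + 1)),
      y • (d i (φ (i + 1) v) + φ i (d (i + 1 + 1 + 1) v)) = 0 := by
    intro i v
    have h1 := hφ (i + 1) v
    have h2 := hφ i (d (i + 1 + 1 + 1) v)
    have e1 : y • d i (φ (i + 1) v)
        = d i (d (i + 1) (ψ (i + 1 + 1) v)) - d i (ψ (i + 1) (d (i + 1 + 1 + 1) v)) := by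
      rw [← map_smul, ← h1, map_sub]
    have e2 : y • φ i (d (i + 1 + 1 + 1) v)
        = d i (ψ (i + 1) (d (i + 1 + 1 + 1) v)) - ψ i (d (i + 1 + 1) (d (i + 1 + 1 + 1) v)) := by
      rw [← h2]
    have e3 : d i (d (i + 1) (ψ (i + 1 + 1) v)) = x • ψ i (ψ (i + 1 + 1) v) :=
      (hψ i (ψ (i + 1 + 1) v)).symm
    have e4 : ψ i (d (i + 1 + 1) (d (i + 1 + 1 + 1) v)) = x • ψ i (ψ (i + 1 + 1) v) := by
      rw [← hψ (i + 1 + 1) v, map_smul]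
    rw [smul_add, e1, e2, e3, e4]
    abel
  refine ⟨key, ?_, ?_⟩
  · have hexists : ∀ (i : ℤ) (v : F (i + 1 + 1 + 1 + 1)),
        ∃ w : F i, d i (φ (i + 1) v) + φ i (d (i + 1 + 1 + 1) v) = x • w := fun i v =>
      exists_smul_of_smul_eq_zero hann _ (key i v)
    classical
    refine ⟨fun i => (Module.Free.chooseBasis S (F (i + 1 + 1 + 1 + 1))).constr S
      (fun j => Classical.choose (hexists i (Module.Free.chooseBasis S (F (i + 1 + 1 + 1 + 1)) j))), ?_⟩
    intro i v
    set b := Module.Free.chooseBasis S (F (i + 1 + 1 + 1 + 1)) with hb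
    have : ((d i).comp (φ (i + 1)) + (φ i).comp (d (i + 1 + 1 + 1)) : F (i+1+1+1+1) →ₗ[S] F i)
        = x • b.constr S (fun j => Classical.choose (hexists i (b j))) := by
      apply b.ext
      intro j
      have := Classical.choose_spec (hexists i (b j))
      simpa [Module.Basis.constr_basis] using this
    have := congrFun (congrArg (fun f => f.toFun) this) v
    simpa using this
  · intro i v
    obtain ⟨w, hw⟩ := exists_smul_of_smul_eq_zero hann _ (key i v)
    rw [hw, Submodule.mkQ_apply, Submodule.Quotient.mk_eq_zero]
    exact Submodule.smul_mem_smul (Ideal.mem_span_singleton_self x) trivial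
end

section
/- Let f: (F,d) → (G,d') be a degree-k morphism of complexes of finitely generated free R-modules, with liftings and operators ψ, ψ' constructed as in the paper. Then for every z ∈ ann_R(ȳ), f∘ψ_z − ψ'_z∘f is null-homotopic: there exists a degree k−1 family θ with f∘ψ_z − ψ'_z∘f = d'∘(−zθ) − (−1)^{k−1}(−zθ)∘d. -/
/-- Naturality of the degree `−2` operators.  Let `f : F → G` be a degree-`k` morphism of
complexes of finitely generated free `R = S/(x)`-modules (here `G` is indexed after shifting
by `k`, so that `f` has degree `0` components and the chain-map condition carries the sign
`(−1)^k`; a lift `f̃` satisfies `d̃'f̃ − (−1)^k f̃ d̃ = x·θ̃`).  Let `ψ̃, ψ̃'` satisfy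
`x·ψ̃ = d̃²`, `x·ψ̃' = (d̃')²`.  Then for every `z` with `z·y ∈ (x)` (a representative of an
element of `ann_R(ȳ)`), the map `f∘ψ_z − ψ'_z∘f` on the reduced complexes equals
`d'∘(−zθ) − (−1)^{k−1}(−zθ)∘d`, so it is null-homotopic via the degree `k−1` family `−zθ`. -/
theorem psi_z_natural {S : Type*} [CommRing S] {x y : S}
    (hxy : IsExactZeroDivisorPair x y)
    (F : ℤ → Type*) [∀ i, AddCommGroup (F i)] [∀ i, Module S (F i)]
    [∀ i, Module.Free S (F i)] [∀ i, Module.Finite S (F i)]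
    (G : ℤ → Type*) [∀ i, AddCommGroup (G i)] [∀ i, Module S (G i)]
    [∀ i, Module.Free S (G i)] [∀ i, Module.Finite S (G i)]
    (d : ∀ i : ℤ, F (i + 1) →ₗ[S] F i) (d' : ∀ i : ℤ, G (i + 1) →ₗ[S] G i)
    (hcomplexF : ∀ (i : ℤ) (v : F (i + 1 + 1)),
      (Ideal.span {x} • ⊤ : Submodule S (F i)).mkQ (d i (d (i + 1) v)) = 0)
    (hcomplexG : ∀ (i : ℤ) (v : G (i + 1 + 1)),
      (Ideal.span {x} • ⊤ : Submodule S (G i)).mkQ (d' i (d' (i + 1) v)) = 0)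
    (ψ : ∀ i : ℤ, F (i + 1 + 1) →ₗ[S] F i) (ψ' : ∀ i : ℤ, G (i + 1 + 1) →ₗ[S] G i)
    (hψ : ∀ (i : ℤ) (v : F (i + 1 + 1)), x • ψ i v = d i (d (i + 1) v))
    (hψ' : ∀ (i : ℤ) (v : G (i + 1 + 1)), x • ψ' i v = d' i (d' (i + 1) v))
    (k : ℤ) (f : ∀ i : ℤ, F i →ₗ[S] G i)
    (θ : ∀ i : ℤ, F (i + 1) →ₗ[S] G i)
    (hf : ∀ (i : ℤ) (v : F (i + 1)),
      d' i (f (i + 1) v) - (((-1 : ℤˣ) ^ k : ℤˣ) : ℤ) • f i (d i v) = x • θ i v)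
    (z : S) (hz : z * y ∈ (Ideal.span {x} : Ideal S)) :
    ∀ (i : ℤ) (v : F (i + 1 + 1)),
      (Ideal.span {x} • ⊤ : Submodule S (G i)).mkQ
          (f i (z • ψ i v) - z • ψ' i (f (i + 1 + 1) v)) =
        (Ideal.span {x} • ⊤ : Submodule S (G i)).mkQ
          (d' i ((-z) • θ (i + 1) v) +
            (((-1 : ℤˣ) ^ k : ℤˣ) : ℤ) • ((-z) • θ i (d (i + 1) v))) := by
  intro i v
  set ε : ℤ := (((-1 : ℤˣ) ^ k : ℤˣ) : ℤ) with hε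
  have hee : ε * ε = 1 := by
    rw [hε, ← Units.val_mul, ← sq, Int.units_sq, Units.val_one]
  set w : G i := f i (ψ i v) - ψ' i (f (i + 1 + 1) v) + d' i (θ (i + 1) v)
      + ε • θ i (d (i + 1) v) with hw
  have hxw : x • w = 0 := by
    have hA : x • f i (ψ i v) = f i (d i (d (i + 1) v)) := by
      rw [← map_smul, hψ]
    have hB : x • ψ' i (f (i + 1 + 1) v) = d' i (d' (i + 1) (f (i + 1 + 1) v)) :=
      hψ' i _
    have hC : x • d' i (θ (i + 1) v)
        = d' i (d' (i + 1) (f (i + 1 + 1) v)) - ε • d' i (f (i + 1) (d (i + 1) v)) := by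
      rw [← map_smul, ← hf (i + 1) v, map_sub, map_zsmul]
    have hD : x • (ε • θ i (d (i + 1) v))
        = ε • d' i (f (i + 1) (d (i + 1) v)) - f i (d i (d (i + 1) v)) := by
      rw [smul_comm, ← hf i (d (i + 1) v), smul_sub, smul_smul, hee, one_smul]
    rw [hw, smul_add, smul_add, smul_sub, hA, hB, hC, hD]
    abel
  have hzw : z • w ∈ (Ideal.span {x} • ⊤ : Submodule S (G i)) := by
    set B := Module.Free.chooseBasis S (G i) with hB
    have hcoord : ∀ b, z * B.repr w b ∈ (Ideal.span {x} : Ideal S) := by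
      intro b
      have h0 : x * B.repr w b = 0 := by
        have := congrArg (fun u => B.repr u b) hxw
        simpa [map_smul, smul_eq_mul] using this
      have hmem : B.repr w b ∈ (Ideal.span {y} : Ideal S) := by
        rw [← hxy.1]
        rw [Submodule.mem_annihilator]
        intro m hm
        obtain ⟨t, ht⟩ := Ideal.mem_span_singleton'.mp hm
        rw [← ht]
        have hcalc : B.repr w b • (t * x) = t * (x * B.repr w b) := by
          rw [smul_eq_mul]; ring
        rw [hcalc, h0, mul_zero]
      obtain ⟨a, ha⟩ := Ideal.mem_span_singleton'.mp hmem
      have : z * B.repr w b = a * (z * y) := by rw [← ha]; ring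
      rw [this]
      exact Ideal.mul_mem_left _ _ hz
    have hrepr : z • w = ∑ b, (z * B.repr w b) • B b := by
      conv_lhs => rw [← B.sum_repr w]
      rw [Finset.smul_sum]
      exact Finset.sum_congr rfl fun b _ => by rw [smul_smul]
    rw [hrepr]
    exact Submodule.sum_mem _ fun b _ =>
      Submodule.smul_mem_smul (hcoord b) Submodule.mem_top
  rw [← sub_eq_zero, ← map_sub]
  have hdiff : (f i (z • ψ i v) - z • ψ' i (f (i + 1 + 1) v))
      - (d' i ((-z) • θ (i + 1) v) + ε • ((-z) • θ i (d (i + 1) v))) = z • w := by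
    rw [hw, map_smul, map_smul, smul_comm ε (-z)]
    simp only [neg_smul, smul_sub, smul_add]
    abel
  rw [hdiff, Submodule.mkQ_apply, Submodule.Quotient.mk_eq_zero]
  exact hzw
end

section
/- Let f: (F,d) → (G,d') be a degree-k morphism of complexes of finitely generated free R-modules, with degree −3 operators φ, φ' constructed from liftings as in the paper. Then φ'∘f is homotopic to (−1)^k f∘φ. -/
lemma smul_factor {S M N : Type*} [CommRing S] [AddCommGroup M] [Module S M]
    [AddCommGroup N] [Module S N] [Module.Free S M] [Module.Free S N]
    {a b : S} (hab : (Ideal.span {a} : Ideal S).annihilator = Ideal.span {b})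
    (T : M →ₗ[S] N) (hT : ∀ v, a • T v = 0) :
    ∃ τ : M →ₗ[S] N, ∀ v, b • τ v = T v := by
  classical
  have key : ∀ w : N, a • w = 0 → ∃ u : N, b • u = w := by
    intro w hw
    obtain ⟨I, B⟩ := Module.Free.exists_basis (R := S) (M := N)
    have hcoef : ∀ i, ∃ t : S, b * t = B.repr w i := by
      intro i
      have h1 : a * B.repr w i = 0 := by
        simpa using congrArg (fun z => B.repr z i) hw
      have h2 : B.repr w i ∈ (Ideal.span {a} : Ideal S).annihilator := by
        rw [Submodule.mem_annihilator]
        intro n hn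
        rw [Ideal.mem_span_singleton'] at hn
        obtain ⟨s, rfl⟩ := hn
        rw [smul_eq_mul]
        linear_combination s * h1
      rw [hab, Ideal.mem_span_singleton'] at h2
      obtain ⟨t, ht⟩ := h2
      exact ⟨t, by rw [mul_comm]; exact ht⟩
    choose t ht using hcoef
    refine ⟨(B.repr w).sum (fun i _ => t i • B i), ?_⟩
    rw [Finsupp.smul_sum]
    have h3 : ((B.repr w).sum fun i _ => b • t i • B i)
        = (B.repr w).sum fun i c => c • B i := by
      apply Finsupp.sum_congr
      intro i _
      rw [smul_smul, ht i]
    rw [h3]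
    exact B.linearCombination_repr w
  obtain ⟨J, C⟩ := Module.Free.exists_basis (R := S) (M := M)
  choose u hu using fun j => key (T (C j)) (hT (C j))
  refine ⟨C.constr S u, fun v => ?_⟩
  have heq : (b • C.constr S u : M →ₗ[S] N) = T := by
    apply C.ext
    intro j
    simp only [LinearMap.smul_apply, Module.Basis.constr_basis]
    exact hu j
  simpa using LinearMap.congr_fun heq v


/-- Naturality of the degree `−3` operators.  Let `f : F → G` be a degree-`k` morphism of
complexes of finitely generated free `R = S/(x)`-modules (here `G` is indexed after shifting
by `k`, so that `f` has degree `0` components and the chain-map condition carries the sign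
`(−1)^k`; a lift `f̃` satisfies `d̃'f̃ − (−1)^k f̃ d̃ = x·θ̃`).  With `ψ̃, ψ̃'` satisfying
`x·ψ̃ = d̃²`, `x·ψ̃' = (d̃')²` and `φ̃, φ̃'` satisfying `d̃ψ̃ − ψ̃d̃ = y·φ̃`,
`d̃'ψ̃' − ψ̃'d̃' = y·φ̃'`, the map `φ'∘f − (−1)^k f∘φ` on the reduced complexes is
null-homotopic. -/
theorem phi_natural {S : Type*} [CommRing S] {x y : S}
    (hxy : IsExactZeroDivisorPair x y)
    (F : ℤ → Type*) [∀ i, AddCommGroup (F i)] [∀ i, Module S (F i)]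
    [∀ i, Module.Free S (F i)] [∀ i, Module.Finite S (F i)]
    (G : ℤ → Type*) [∀ i, AddCommGroup (G i)] [∀ i, Module S (G i)]
    [∀ i, Module.Free S (G i)] [∀ i, Module.Finite S (G i)]
    (d : ∀ i : ℤ, F (i + 1) →ₗ[S] F i) (d' : ∀ i : ℤ, G (i + 1) →ₗ[S] G i)
    (hcomplexF : ∀ (i : ℤ) (v : F (i + 1 + 1)),
      (Ideal.span {x} • ⊤ : Submodule S (F i)).mkQ (d i (d (i + 1) v)) = 0)
    (hcomplexG : ∀ (i : ℤ) (v : G (i + 1 + 1)),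
      (Ideal.span {x} • ⊤ : Submodule S (G i)).mkQ (d' i (d' (i + 1) v)) = 0)
    (ψ : ∀ i : ℤ, F (i + 1 + 1) →ₗ[S] F i) (ψ' : ∀ i : ℤ, G (i + 1 + 1) →ₗ[S] G i)
    (hψ : ∀ (i : ℤ) (v : F (i + 1 + 1)), x • ψ i v = d i (d (i + 1) v))
    (hψ' : ∀ (i : ℤ) (v : G (i + 1 + 1)), x • ψ' i v = d' i (d' (i + 1) v))
    (φ : ∀ i : ℤ, F (i + 1 + 1 + 1) →ₗ[S] F i)
    (φ' : ∀ i : ℤ, G (i + 1 + 1 + 1) →ₗ[S] G i)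
    (hφ : ∀ (i : ℤ) (v : F (i + 1 + 1 + 1)),
      d i (ψ (i + 1) v) - ψ i (d (i + 1 + 1) v) = y • φ i v)
    (hφ' : ∀ (i : ℤ) (v : G (i + 1 + 1 + 1)),
      d' i (ψ' (i + 1) v) - ψ' i (d' (i + 1 + 1) v) = y • φ' i v)
    (k : ℤ) (f : ∀ i : ℤ, F i →ₗ[S] G i)
    (θ : ∀ i : ℤ, F (i + 1) →ₗ[S] G i)
    (hf : ∀ (i : ℤ) (v : F (i + 1)),
      d' i (f (i + 1) v) - (((-1 : ℤˣ) ^ k : ℤˣ) : ℤ) • f i (d i v) = x • θ i v) :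
    ∃ σ : ∀ i : ℤ, F (i + 1 + 1) →ₗ[S] G i,
      ∀ (i : ℤ) (v : F (i + 1 + 1 + 1)),
        (Ideal.span {x} • ⊤ : Submodule S (G i)).mkQ
            (φ' i (f (i + 1 + 1 + 1) v) - (((-1 : ℤˣ) ^ k : ℤˣ) : ℤ) • f i (φ i v)) =
          (Ideal.span {x} • ⊤ : Submodule S (G i)).mkQ
            (d' i (σ (i + 1) v) -
              (((-1 : ℤˣ) ^ k : ℤˣ) : ℤ) • σ i (d (i + 1 + 1) v)) := by
  classical
  set ε : ℤ := (((-1 : ℤˣ) ^ k : ℤˣ) : ℤ) with hε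
  set e : S := (ε : S) with he
  have hee : e * e = 1 := by
    rcases Int.units_eq_one_or ((-1 : ℤˣ) ^ k) with h | h <;> simp [he, hε, h]
  have hcast : ∀ (i : ℤ) (v : G i), ε • v = e • v := by
    intro i v
    rw [he, Int.cast_smul_eq_zsmul]
  -- chain map condition with S-scalar
  have hf' : ∀ (i : ℤ) (v : F (i + 1)),
      d' i (f (i + 1) v) - e • f i (d i v) = x • θ i v := by
    intro i v; rw [← hcast]; exact hf i v
  -- step 1: homotopy between ψ' f and f ψ up to y-multiple
  have step1 : ∀ i : ℤ, ∃ τ : F (i + 1 + 1) →ₗ[S] G i, ∀ v, y • τ v =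
      ψ' i (f (i + 1 + 1) v) - f i (ψ i v) - d' i (θ (i + 1) v)
        - e • θ i (d (i + 1) v) := by
    intro i
    have hT : ∀ v, x • (ψ' i ∘ₗ f (i + 1 + 1) - f i ∘ₗ ψ i - d' i ∘ₗ θ (i + 1)
        - e • (θ i ∘ₗ d (i + 1))) v = 0 := ?_
    case _ =>
      obtain ⟨τ, hτ⟩ := smul_factor hxy.1 _ hT
      exact ⟨τ, fun v => by simpa using hτ v⟩
    intro v
    simp only [LinearMap.sub_apply, LinearMap.comp_apply, LinearMap.smul_apply]
    have h1 : x • ψ' i (f (i + 1 + 1) v) = d' i (d' (i + 1) (f (i + 1 + 1) v)) :=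
      hψ' i (f (i + 1 + 1) v)
    have h2 : x • f i (ψ i v) = f i (d i (d (i + 1) v)) := by
      rw [← map_smul, hψ]
    have h3 : x • θ (i + 1) v
        = d' (i + 1) (f (i + 1 + 1) v) - e • f (i + 1) (d (i + 1) v) :=
      (hf' (i + 1) v).symm
    have h4 : x • θ i (d (i + 1) v)
        = d' i (f (i + 1) (d (i + 1) v)) - e • f i (d i (d (i + 1) v)) :=
      (hf' i (d (i + 1) v)).symm
    rw [smul_sub, smul_sub, smul_sub, h1, h2, smul_comm x e, h4, ← map_smul (d' i), h3,
      map_sub, map_smul, smul_sub, smul_smul, hee, one_smul]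
    abel
  choose τ hτ using step1
  -- step 2: φ' f - ε f φ - (d' τ - ε τ d) is an x-multiple
  have step2 : ∀ i : ℤ, ∃ μ : F (i + 1 + 1 + 1) →ₗ[S] G i, ∀ v, x • μ v =
      φ' i (f (i + 1 + 1 + 1) v) - e • f i (φ i v)
        - (d' i (τ (i + 1) v) - e • τ i (d (i + 1 + 1) v)) := by
    intro i
    have hT : ∀ v, y • (φ' i ∘ₗ f (i + 1 + 1 + 1) - e • (f i ∘ₗ φ i)
        - (d' i ∘ₗ τ (i + 1) - e • (τ i ∘ₗ d (i + 1 + 1)))) v = 0 := ?_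
    case _ =>
      obtain ⟨μ, hμ⟩ := smul_factor hxy.2
        (φ' i ∘ₗ f (i + 1 + 1 + 1) - e • (f i ∘ₗ φ i)
          - (d' i ∘ₗ τ (i + 1) - e • (τ i ∘ₗ d (i + 1 + 1)))) hT
      exact ⟨μ, fun v => by simpa using hμ v⟩
    intro v
    simp only [LinearMap.sub_apply, LinearMap.comp_apply, LinearMap.smul_apply]
    have h1 : y • φ' i (f (i + 1 + 1 + 1) v)
        = d' i (ψ' (i + 1) (f (i + 1 + 1 + 1) v))
          - ψ' i (d' (i + 1 + 1) (f (i + 1 + 1 + 1) v)) :=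
      (hφ' i (f (i + 1 + 1 + 1) v)).symm
    have h2 : y • f i (φ i v)
        = f i (d i (ψ (i + 1) v)) - f i (ψ i (d (i + 1 + 1) v)) := by
      rw [← map_smul, ← hφ, map_sub]
    have h3 : y • d' i (τ (i + 1) v) = d' i
        (ψ' (i + 1) (f (i + 1 + 1 + 1) v) - f (i + 1) (ψ (i + 1) v)
          - d' (i + 1) (θ (i + 1 + 1) v) - e • θ (i + 1) (d (i + 1 + 1) v)) := by
      rw [← map_smul, hτ]
    have h4 : y • τ i (d (i + 1 + 1) v)
        = ψ' i (f (i + 1 + 1) (d (i + 1 + 1) v)) - f i (ψ i (d (i + 1 + 1) v))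
          - d' i (θ (i + 1) (d (i + 1 + 1) v))
          - e • θ i (d (i + 1) (d (i + 1 + 1) v)) :=
      hτ i (d (i + 1 + 1) v)
    have h5raw : ψ' i (d' (i + 1 + 1) (f (i + 1 + 1 + 1) v))
        - e • ψ' i (f (i + 1 + 1) (d (i + 1 + 1) v))
        = d' i (d' (i + 1) (θ (i + 1 + 1) v)) := by
      rw [← map_smul, ← map_sub, hf', map_smul, hψ']
    have h5 := sub_eq_iff_eq_add.mp h5raw
    have h6 := sub_eq_iff_eq_add.mp (hf' i (ψ (i + 1) v))
    have h7 : θ i (d (i + 1) (d (i + 1 + 1) v)) = x • θ i (ψ (i + 1) v) := by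
      rw [← map_smul, hψ]
    rw [smul_sub, smul_sub, smul_sub, h1, smul_comm y e, h2, h3, smul_comm y e, h4]
    simp only [map_sub, map_smul, smul_sub, smul_smul, hee, one_smul]
    rw [h5, h6, h7]
    abel
  choose μ hμ using step2
  refine ⟨τ, fun i v => ?_⟩
  rw [Submodule.mkQ_apply, Submodule.mkQ_apply, Submodule.Quotient.eq]
  have : φ' i (f (i + 1 + 1 + 1) v) - ε • f i (φ i v)
      - (d' i (τ (i + 1) v) - ε • τ i (d (i + 1 + 1) v)) = x • μ i v := by
    rw [hcast, hcast, (hμ i v)]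
  rw [this]
  exact Submodule.smul_mem_smul (Ideal.mem_span_singleton_self x) trivial
end

section
/- The operators ψ_z and φ constructed from a complex of free R-modules are independent, up to chain homotopy, of the choice of lifting (F̃, d̃) and of the choices of ψ̃ and φ̃. -/
/-- In a free module, if `a • n = 0` and `ann(a) = (b)`, then `n` is divisible by `b`. -/
lemma free_div {S : Type*} [CommRing S] {a b : S}
    (hab : (Ideal.span {a} : Ideal S).annihilator = Ideal.span {b})
    {M : Type*} [AddCommGroup M] [Module S M] [Module.Free S M]
    (n : M) (h : a • n = 0) : ∃ m : M, b • m = n := by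
  classical
  set B := Module.Free.chooseBasis S M with hB
  have hc : ∀ j, ∃ s : S, s * b = B.repr n j := by
    intro j
    have h1 : a * B.repr n j = 0 := by
      have := congrArg (fun m => B.repr m j) h
      simpa [smul_eq_mul] using this
    have h2 : B.repr n j ∈ (Ideal.span {a} : Ideal S).annihilator := by
      rw [Submodule.mem_annihilator]
      intro p hp
      obtain ⟨s, rfl⟩ := Ideal.mem_span_singleton'.mp hp
      rw [smul_eq_mul, show B.repr n j * (s * a) = s * (a * B.repr n j) by ring, h1, mul_zero]
    rw [hab] at h2
    exact Ideal.mem_span_singleton'.mp h2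
  choose s hs using hc
  refine ⟨∑ j ∈ (B.repr n).support, s j • B j, ?_⟩
  rw [Finset.smul_sum]
  have step : ∀ j ∈ (B.repr n).support, b • s j • B j = B.repr n j • B j := by
    intro j _
    rw [smul_smul, mul_comm, hs j]
  rw [Finset.sum_congr rfl step]
  conv_rhs => rw [← B.linearCombination_repr n]
  rw [Finsupp.linearCombination_apply, Finsupp.sum]

/-- Lift a pointwise-divisible linear map: if `f v` is divisible by `a` for each `v`
and the domain is free, there is a linear `e` with `a • e = f`. -/
lemma lift_smul {S : Type*} [CommRing S] (a : S)
    {M N : Type*} [AddCommGroup M] [Module S M] [Module.Free S M]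
    [AddCommGroup N] [Module S N]
    (f : M →ₗ[S] N) (h : ∀ v, ∃ m, a • m = f v) :
    ∃ e : M →ₗ[S] N, ∀ v, a • e v = f v := by
  classical
  set B := Module.Free.chooseBasis S M with hB
  choose g hg using fun j => h (B j)
  refine ⟨B.constr S g, fun v => ?_⟩
  have : (a • B.constr S g : M →ₗ[S] N) = f := by
    apply B.ext; intro j
    simp only [LinearMap.smul_apply, Module.Basis.constr_basis, hg]
  calc a • (B.constr S g) v = (a • B.constr S g : M →ₗ[S] N) v := rfl
    _ = f v := by rw [this]

/-- Independence of choices.  Given two liftings `d, d'` (over the same free `S`-modules)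
of the differential of one complex of free `R = S/(x)`-modules (i.e. `d ≡ d'` mod `x`),
together with choices `ψ, ψ'` satisfying `x·ψ = d²`, `x·ψ' = (d')²`, and `φ, φ'` satisfying
`dψ − ψd = y·φ`, `d'ψ' − ψ'd' = y·φ'`, the resulting operators `ψ_z, ψ'_z` (for any
representative `z` of an element of `ann_R(ȳ)`) and `φ, φ'` on the reduced complex are
chain homotopic. -/
theorem operators_independent_of_choices {S : Type*} [CommRing S] {x y : S}
    (hxy : IsExactZeroDivisorPair x y)
    (F : ℤ → Type*) [∀ i, AddCommGroup (F i)] [∀ i, Module S (F i)]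
    [∀ i, Module.Free S (F i)]
    (d d' : ∀ i : ℤ, F (i + 1) →ₗ[S] F i)
    (hcomplex : ∀ (i : ℤ) (v : F (i + 1 + 1)),
      (Ideal.span {x} • ⊤ : Submodule S (F i)).mkQ (d i (d (i + 1) v)) = 0)
    (hdd' : ∀ (i : ℤ) (v : F (i + 1)),
      (Ideal.span {x} • ⊤ : Submodule S (F i)).mkQ (d i v) =
        (Ideal.span {x} • ⊤ : Submodule S (F i)).mkQ (d' i v))
    (ψ ψ' : ∀ i : ℤ, F (i + 1 + 1) →ₗ[S] F i)
    (hψ : ∀ (i : ℤ) (v : F (i + 1 + 1)), x • ψ i v = d i (d (i + 1) v))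
    (hψ' : ∀ (i : ℤ) (v : F (i + 1 + 1)), x • ψ' i v = d' i (d' (i + 1) v))
    (φ φ' : ∀ i : ℤ, F (i + 1 + 1 + 1) →ₗ[S] F i)
    (hφ : ∀ (i : ℤ) (v : F (i + 1 + 1 + 1)),
      d i (ψ (i + 1) v) - ψ i (d (i + 1 + 1) v) = y • φ i v)
    (hφ' : ∀ (i : ℤ) (v : F (i + 1 + 1 + 1)),
      d' i (ψ' (i + 1) v) - ψ' i (d' (i + 1 + 1) v) = y • φ' i v)
    (z : S) (hz : z * y ∈ (Ideal.span {x} : Ideal S)) :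
    (∃ τ : ∀ i : ℤ, F (i + 1) →ₗ[S] F i,
      ∀ (i : ℤ) (v : F (i + 1 + 1)),
        (Ideal.span {x} • ⊤ : Submodule S (F i)).mkQ (z • ψ i v - z • ψ' i v) =
          (Ideal.span {x} • ⊤ : Submodule S (F i)).mkQ
            (d i (τ (i + 1) v) + τ i (d (i + 1) v))) ∧
    (∃ σ : ∀ i : ℤ, F (i + 1 + 1) →ₗ[S] F i,
      ∀ (i : ℤ) (v : F (i + 1 + 1 + 1)),
        (Ideal.span {x} • ⊤ : Submodule S (F i)).mkQ (φ i v - φ' i v) =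
          (Ideal.span {x} • ⊤ : Submodule S (F i)).mkQ
            (d i (σ (i + 1) v) - σ i (d (i + 1 + 1) v))) := by
  classical
  obtain ⟨hx, hy⟩ := hxy
  have hxy0 : x * y = 0 := by
    have hymem : y ∈ (Ideal.span {x} : Ideal S).annihilator := by
      rw [hx]; exact Ideal.mem_span_singleton_self y
    have := Submodule.mem_annihilator.mp hymem x (Ideal.mem_span_singleton_self x)
    rw [smul_eq_mul] at this
    rw [mul_comm]; exact this
  have hyx0 : y * x = 0 := by rw [mul_comm]; exact hxy0
  -- construct e with x • e = d - d'
  have he0 : ∀ i : ℤ, ∃ e : F (i + 1) →ₗ[S] F i, ∀ v, x • e v = d i v - d' i v := by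
    intro i
    obtain ⟨e, he⟩ := lift_smul x (d i - d' i) (fun v => by
      have hm : d i v - d' i v ∈ (Ideal.span {x} • ⊤ : Submodule S (F i)) := by
        rw [← Submodule.Quotient.eq]
        exact hdd' i v
      rw [Submodule.ideal_span_singleton_smul] at hm
      obtain ⟨m, _, hm2⟩ := Set.mem_smul_set.mp hm
      exact ⟨m, hm2.symm ▸ by simp⟩)
    exact ⟨e, fun v => by simpa using he v⟩
  choose e he using he0
  have hd'2 : ∀ (i : ℤ) (v : F (i + 1)), d' i v = d i v - x • e i v := by
    intro i v; rw [he i v]; abel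
  -- x • ψ' in terms of d and e
  have hps' : ∀ (i : ℤ) (v : F (i + 1 + 1)),
      x • ψ' i v = d i (d (i + 1) v) - x • d i (e (i + 1) v) - x • e i (d (i + 1) v)
        + x • x • e i (e (i + 1) v) := by
    intro i v
    rw [hψ' i v, hd'2 (i + 1) v, map_sub, map_smul, hd'2 i (d (i + 1) v),
      hd'2 i (e (i + 1) v)]
    module
  -- construct γ with y • γ = ψ - ψ' - d∘e - e∘d + x • e∘e
  have hγ0 : ∀ i : ℤ, ∃ γ : F (i + 1 + 1) →ₗ[S] F i, ∀ v,
      y • γ v = ψ i v - ψ' i v - d i (e (i + 1) v) - e i (d (i + 1) v)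
        + x • e i (e (i + 1) v) := by
    intro i
    obtain ⟨γ, hγ⟩ := lift_smul y
      (ψ i - ψ' i - d i ∘ₗ e (i + 1) - e i ∘ₗ d (i + 1) + x • (e i ∘ₗ e (i + 1)))
      (fun v => by
        apply free_div hx
        simp only [LinearMap.sub_apply, LinearMap.add_apply, LinearMap.comp_apply,
          LinearMap.smul_apply, smul_sub, smul_add]
        rw [hψ i v, hps' i v]
        module)
    exact ⟨γ, fun v => by simpa using hγ v⟩
  choose γ hγ using hγ0
  have hps'2 : ∀ (i : ℤ) (w : F (i + 1 + 1)),
      ψ' i w = ψ i w - d i (e (i + 1) w) - e i (d (i + 1) w)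
        + x • e i (e (i + 1) w) - y • γ i w := by
    intro i w
    rw [hγ i w]; abel
  constructor
  · -- the ψ-homotopy
    refine ⟨fun i => z • e i, fun i v => ?_⟩
    rw [Submodule.mkQ_apply, Submodule.mkQ_apply, Submodule.Quotient.eq]
    have key : (z • ψ i v - z • ψ' i v) -
        (d i ((z • e (i + 1)) v) + (z • e i) (d (i + 1) v)) =
        (z * y) • γ i v - (z * x) • e i (e (i + 1) v) := by
      rw [hps'2 i v]
      simp only [LinearMap.smul_apply, map_smul]
      module
    rw [key]
    refine sub_mem ?_ ?_
    · exact Submodule.smul_mem_smul hz Submodule.mem_top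
    · exact Submodule.smul_mem_smul (Ideal.mem_span_singleton'.mpr ⟨z, rfl⟩)
        Submodule.mem_top
  · -- the φ-homotopy
    refine ⟨γ, fun i v => ?_⟩
    rw [Submodule.mkQ_apply, Submodule.mkQ_apply, Submodule.Quotient.eq]
    have hw : y • (φ i v - φ' i v - (d i (γ (i + 1) v) - γ i (d (i + 1 + 1) v))) = 0 := by
      simp only [smul_sub]
      rw [← hφ i v, ← hφ' i v]
      rw [show y • d i (γ (i + 1) v) = d i (y • γ (i + 1) v) from (map_smul _ _ _).symm,
        hγ (i + 1) v, hγ i (d (i + 1 + 1) v)]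
      rw [hd'2 i (ψ' (i + 1) v), hd'2 (i + 1 + 1) v]
      simp only [hps'2, map_sub, map_add, map_smul, smul_sub, smul_add, smul_smul,
        hxy0, hyx0, zero_smul, smul_zero, ← hψ]
      module
    obtain ⟨m, hm⟩ := free_div hy _ hw
    rw [← hm]
    exact Submodule.smul_mem_smul (Ideal.mem_span_singleton_self x) Submodule.mem_top
end

section
/- In the setting of the construction, the degree −3 operator φ satisfies: 2φ² is null-homotopic on the complex F. -/
lemma aux_exists_smul {S M : Type*} [CommRing S] [AddCommGroup M] [Module S M]
    [Module.Free S M] {a b : S} (hab : ∀ s : S, a * s = 0 → b ∣ s)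
    (u : M) (hu : a • u = 0) : ∃ w : M, u = b • w := by
  classical
  let c := Module.Free.chooseBasis S M
  have hc : ∀ i, a * c.repr u i = 0 := by
    intro i
    have := congrArg (fun z => c.repr z i) hu
    simpa [map_smul, smul_eq_mul] using this
  choose f hf using fun i => hab _ (hc i)
  refine ⟨∑ i ∈ (c.repr u).support, f i • c i, ?_⟩
  have h1 : b • ∑ i ∈ (c.repr u).support, f i • c i
      = ∑ i ∈ (c.repr u).support, c.repr u i • c i := by
    rw [Finset.smul_sum]
    exact Finset.sum_congr rfl fun i _ => by rw [smul_smul, ← hf i]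
  rw [h1]
  have := c.linearCombination_repr u
  rw [Finsupp.linearCombination_apply, Finsupp.sum] at this
  exact this.symm

lemma aux_exists_div {S M N : Type*} [CommRing S] [AddCommGroup M] [Module S M]
    [Module.Free S M] [AddCommGroup N] [Module S N] [Module.Free S N]
    {a b : S} (hab : ∀ s : S, a * s = 0 → b ∣ s)
    (h : M →ₗ[S] N) (hh : ∀ v, a • h v = 0) : ∃ χ : M →ₗ[S] N, ∀ v, b • χ v = h v := by
  classical
  let c := Module.Free.chooseBasis S M
  choose w hw using fun i => aux_exists_smul hab (h (c i)) (hh (c i))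
  refine ⟨c.constr S w, ?_⟩
  have : h = b • c.constr S w := by
    apply c.ext
    intro i
    simp [Module.Basis.constr_basis, hw i]
  intro v
  rw [this]
  rfl


/-- In the setting of the construction, the degree `−3` operator `φ` (the reduction mod `x`
of `φ̃` with `d̃ψ̃ − ψ̃d̃ = y·φ̃`) satisfies: `2φ²` is null-homotopic on the reduced
complex. -/
theorem two_phi_sq_nullhomotopic {S : Type*} [CommRing S] {x y : S}
    (hxy : IsExactZeroDivisorPair x y)
    (F : ℤ → Type*) [∀ i, AddCommGroup (F i)] [∀ i, Module S (F i)]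
    [∀ i, Module.Free S (F i)]
    (d : ∀ i : ℤ, F (i + 1) →ₗ[S] F i)
    (hcomplex : ∀ (i : ℤ) (v : F (i + 1 + 1)),
      (Ideal.span {x} • ⊤ : Submodule S (F i)).mkQ (d i (d (i + 1) v)) = 0)
    (ψ : ∀ i : ℤ, F (i + 1 + 1) →ₗ[S] F i)
    (hψ : ∀ (i : ℤ) (v : F (i + 1 + 1)), x • ψ i v = d i (d (i + 1) v))
    (φ : ∀ i : ℤ, F (i + 1 + 1 + 1) →ₗ[S] F i)
    (hφ : ∀ (i : ℤ) (v : F (i + 1 + 1 + 1)),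
      d i (ψ (i + 1) v) - ψ i (d (i + 1 + 1) v) = y • φ i v) :
    ∃ σ : ∀ i : ℤ, F (i + 1 + 1 + 1 + 1 + 1) →ₗ[S] F i,
      ∀ (i : ℤ) (v : F (i + 1 + 1 + 1 + 1 + 1 + 1)),
        (Ideal.span {x} • ⊤ : Submodule S (F i)).mkQ
            ((2 : ℤ) • φ i (φ (i + 1 + 1 + 1) v)) =
          (Ideal.span {x} • ⊤ : Submodule S (F i)).mkQ
            (d i (σ (i + 1) v) + σ i (d (i + 1 + 1 + 1 + 1 + 1) v)) := by
  classical
  obtain ⟨ha1, ha2⟩ := hxy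
  have hyx : ∀ s : S, y * s = 0 → x ∣ s := by
    intro s hs
    rw [← Ideal.mem_span_singleton, ← ha2, Ideal.span, Submodule.mem_annihilator_span_singleton,
      smul_eq_mul, mul_comm]
    exact hs
  have hxd : ∀ s : S, x * s = 0 → y ∣ s := by
    intro s hs
    rw [← Ideal.mem_span_singleton, ← ha1, Ideal.span, Submodule.mem_annihilator_span_singleton,
      smul_eq_mul, mul_comm]
    exact hs
  -- construct χ with x • χ = dφ + φd
  have hχex : ∀ i : ℤ, ∃ χi : F (i + 1 + 1 + 1 + 1) →ₗ[S] F i,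
      ∀ v, x • χi v = d i (φ (i + 1) v) + φ i (d (i + 1 + 1 + 1) v) := by
    intro i
    obtain ⟨χi, hχi⟩ := aux_exists_div hyx
      ((d i).comp (φ (i + 1)) + (φ i).comp (d (i + 1 + 1 + 1)))
      (by
        intro v
        simp only [LinearMap.add_apply, LinearMap.comp_apply]
        rw [smul_add, ← (d i).map_smul, ← hφ (i + 1) v, ← hφ i (d (i + 1 + 1 + 1) v),
          (d i).map_sub, ← hψ i (ψ (i + 1 + 1) v), ← hψ (i + 1 + 1) v, (ψ i).map_smul]
        abel)
    exact ⟨χi, by simpa only [LinearMap.add_apply, LinearMap.comp_apply] using hχi⟩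
  choose χ hχ using hχex
  -- construct σ with y • σ = dχ - χd - ψφ + φψ
  have hσex : ∀ i : ℤ, ∃ σi : F (i + 1 + 1 + 1 + 1 + 1) →ₗ[S] F i,
      ∀ v, y • σi v = d i (χ (i + 1) v) - χ i (d (i + 1 + 1 + 1 + 1) v)
        - ψ i (φ (i + 1 + 1) v) + φ i (ψ (i + 1 + 1 + 1) v) := by
    intro i
    obtain ⟨σi, hσi⟩ := aux_exists_div hxd
      ((d i).comp (χ (i + 1)) - (χ i).comp (d (i + 1 + 1 + 1 + 1))
        - (ψ i).comp (φ (i + 1 + 1)) + (φ i).comp (ψ (i + 1 + 1 + 1)))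
      (by
        intro v
        simp only [LinearMap.add_apply, LinearMap.sub_apply, LinearMap.comp_apply]
        rw [smul_add, smul_sub, smul_sub, ← (d i).map_smul, hχ (i + 1) v, (d i).map_add,
          hχ i (d (i + 1 + 1 + 1 + 1) v), hψ i (φ (i + 1 + 1) v),
          ← (φ i).map_smul, hψ (i + 1 + 1 + 1) v]
        abel)
    exact ⟨σi, by
      simpa only [LinearMap.add_apply, LinearMap.sub_apply, LinearMap.comp_apply] using hσi⟩
  choose σ hσ using hσex
  refine ⟨fun i => -σ i, ?_⟩
  intro i v
  -- the exact identity: y • (2φφ + dσ + σd) = 0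
  have key : y • ((2 : ℤ) • φ i (φ (i + 1 + 1 + 1) v)
      + (d i (σ (i + 1) v) + σ i (d (i + 1 + 1 + 1 + 1 + 1) v))) = 0 := by
    have f1 := hφ i (φ (i + 1 + 1 + 1) v)
    have c2'' : d (i + 1 + 1) (φ (i + 1 + 1 + 1) v)
        = x • χ (i + 1 + 1) v - φ (i + 1 + 1) (d (i + 1 + 1 + 1 + 1 + 1) v) := by
      rw [hχ (i + 1 + 1) v]; abel
    have cc : d i (φ (i + 1) (ψ (i + 1 + 1 + 1 + 1) v))
        = x • χ i (ψ (i + 1 + 1 + 1 + 1) v)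
          - φ i (d (i + 1 + 1 + 1) (ψ (i + 1 + 1 + 1 + 1) v)) := by
      rw [hχ i (ψ (i + 1 + 1 + 1 + 1) v)]; abel
    have f2' : d (i + 1 + 1 + 1) (ψ (i + 1 + 1 + 1 + 1) v)
        = y • φ (i + 1 + 1 + 1) v + ψ (i + 1 + 1 + 1) (d (i + 1 + 1 + 1 + 1 + 1) v) := by
      rw [← hφ (i + 1 + 1 + 1) v]; abel
    rw [smul_add, smul_add, smul_comm y (2 : ℤ), ← f1,
      ← (d i).map_smul, hσ (i + 1) v, (d i).map_add, (d i).map_sub, (d i).map_sub,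
      ← hψ i (χ (i + 1 + 1) v), cc, f2', (φ i).map_add, (φ i).map_smul, ← f1,
      hσ i (d (i + 1 + 1 + 1 + 1 + 1) v), ← hψ (i + 1 + 1 + 1 + 1) v, (χ i).map_smul,
      c2'', (ψ i).map_sub, (ψ i).map_smul]
    abel
  obtain ⟨w, hw⟩ := aux_exists_smul hyx _ key
  simp only [LinearMap.neg_apply, map_neg]
  rw [Submodule.mkQ_apply, Submodule.mkQ_apply, Submodule.Quotient.eq]
  have : (2 : ℤ) • φ i (φ (i + 1 + 1 + 1) v)
      - (-d i (σ (i + 1) v) + -σ i (d (i + 1 + 1 + 1 + 1 + 1) v))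
      = (2 : ℤ) • φ i (φ (i + 1 + 1 + 1) v)
        + (d i (σ (i + 1) v) + σ i (d (i + 1 + 1 + 1 + 1 + 1) v)) := by abel
  rw [this, hw]
  exact Submodule.smul_mem_smul (Ideal.mem_span_singleton_self x) Submodule.mem_top
end

section
/- Let S = Q[x,y,z,w,t]/(x⁴, y⁴, w⁴, z⁴, x²y², y²w², z²w², xt, zt, wt), f = x² + y² + z² + w², R = S/(f), and g = x² + y² − z² − w². Then the annihilator of the image of g in R equals the ideal (t, y², z², w²) of R. -/
set_option synthInstance.maxHeartbeats 1000000
set_option maxHeartbeats 1000000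

open MvPolynomial

/-- The ideal `(x⁴, y⁴, w⁴, z⁴, x²y², y²w², z²w², xt, zt, wt)` of `ℚ[x,y,z,w,t]`,
with variables `x=X 0, y=X 1, z=X 2, w=X 3, t=X 4`. -/
noncomputable def WindleIdeal : Ideal (MvPolynomial (Fin 5) ℚ) :=
  Ideal.span {X 0 ^ 4, X 1 ^ 4, X 3 ^ 4, X 2 ^ 4, X 0 ^ 2 * X 1 ^ 2,
    X 1 ^ 2 * X 3 ^ 2, X 2 ^ 2 * X 3 ^ 2, X 0 * X 4, X 2 * X 4, X 3 * X 4}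

/-- `S = ℚ[x,y,z,w,t]/(x⁴, y⁴, w⁴, z⁴, x²y², y²w², z²w², xt, zt, wt)`. -/
noncomputable abbrev WindleRingS : Type :=
  MvPolynomial (Fin 5) ℚ ⧸ WindleIdeal

/-- The image of `f = x² + y² + z² + w²` in `S`. -/
noncomputable def windleF : WindleRingS :=
  Ideal.Quotient.mk WindleIdeal (X 0 ^ 2 + X 1 ^ 2 + X 2 ^ 2 + X 3 ^ 2)

/-- `R = S/(f)` where `f = x² + y² + z² + w²`. -/
noncomputable abbrev WindleRingR : Type :=
  WindleRingS ⧸ (Ideal.span {windleF} : Ideal WindleRingS)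

/-- The image in `R` of a polynomial in `ℚ[x,y,z,w,t]`. -/
noncomputable def windleMk (p : MvPolynomial (Fin 5) ℚ) : WindleRingR :=
  Ideal.Quotient.mk (Ideal.span {windleF}) (Ideal.Quotient.mk WindleIdeal p)

namespace WindleAux

abbrev P5 := MvPolynomial (Fin 5) ℚ

noncomputable def fpoly : P5 := X 0 ^ 2 + X 1 ^ 2 + X 2 ^ 2 + X 3 ^ 2
noncomputable def gpoly : P5 := X 0 ^ 2 + X 1 ^ 2 - X 2 ^ 2 - X 3 ^ 2

noncomputable def Jfull : Ideal P5 := WindleIdeal ⊔ Ideal.span {fpoly}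

lemma windleMk_mul (p q : P5) : windleMk p * windleMk q = windleMk (p * q) := by
  simp [windleMk, map_mul]

lemma windleMk_sub (p q : P5) : windleMk p - windleMk q = windleMk (p - q) := by
  simp [windleMk, map_sub]

lemma windleMk_zero_iff (p : P5) : windleMk p = 0 ↔ p ∈ Jfull := by
  rw [windleMk, Ideal.Quotient.eq_zero_iff_mem]
  have h1 : (Ideal.span {windleF} : Ideal WindleRingS)
      = Ideal.map (Ideal.Quotient.mk WindleIdeal) (Ideal.span {fpoly}) := by
    rw [Ideal.map_span, Set.image_singleton]; rfl
  have h2 : Ideal.comap (Ideal.Quotient.mk WindleIdeal) ⊥ = WindleIdeal := by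
    ext x
    simp [Ideal.mem_comap, Ideal.Quotient.eq_zero_iff_mem]
  rw [h1, ← Ideal.mem_comap,
    Ideal.comap_map_of_surjective _ Ideal.Quotient.mk_surjective, h2, Jfull, sup_comm]

/-! ### The linear functional -/

noncomputable def mu1 : Fin 5 →₀ ℕ :=
  Finsupp.single 0 1 + Finsupp.single 1 3 + Finsupp.single 2 1 + Finsupp.single 3 1
noncomputable def mu2 : Fin 5 →₀ ℕ :=
  Finsupp.single 0 1 + Finsupp.single 1 1 + Finsupp.single 2 1 + Finsupp.single 3 3

noncomputable def lam : P5 →ₗ[ℚ] ℚ where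
  toFun p := coeff mu1 p - coeff mu2 p
  map_add' p q := by simp [coeff_add]; ring
  map_smul' c p := by simp [coeff_smul]; ring

lemma lam_apply (p : P5) : lam p = coeff mu1 p - coeff mu2 p := rfl

lemma lam_monomial (s : Fin 5 →₀ ℕ) (c : ℚ) :
    lam (monomial s c) = (if s = mu1 then c else 0) - (if s = mu2 then c else 0) := by
  simp [lam_apply, coeff_monomial]

lemma lam_monomial_eq_zero {s : Fin 5 →₀ ℕ} (h1 : s ≠ mu1) (h2 : s ≠ mu2) (c : ℚ) :
    lam (monomial s c) = 0 := by
  rw [lam_monomial, if_neg h1, if_neg h2, sub_zero]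

noncomputable def lamKer : Ideal P5 where
  carrier := {p | ∀ q, lam (q * p) = 0}
  zero_mem' := by intro q; simp
  add_mem' := by
    intro a b ha hb q
    rw [mul_add, map_add, ha q, hb q, add_zero]
  smul_mem' := by
    intro r p hp q
    rw [smul_eq_mul, ← mul_assoc]
    exact hp (q * r)

lemma lam_mul_monomial_zero {s : Fin 5 →₀ ℕ} (h1 : ¬ s ≤ mu1) (h2 : ¬ s ≤ mu2)
    (q : P5) (c : ℚ) : lam (q * monomial s c) = 0 := by
  rw [lam_apply, coeff_mul_monomial', coeff_mul_monomial', if_neg h1, if_neg h2, sub_zero]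

lemma not_le_mu {s : Fin 5 →₀ ℕ} (j : Fin 5) {t : Fin 5 →₀ ℕ} (h : ¬ s j ≤ t j) :
    ¬ s ≤ t := fun hle => h (Finsupp.le_def.1 hle j)

lemma gen_f_mem : fpoly ∈ lamKer := by
  intro q
  have hx : lam (q * X 0 ^ 2) = 0 := by
    rw [X_pow_eq_monomial]
    refine lam_mul_monomial_zero ?_ ?_ q 1 <;>
      · apply not_le_mu 0
        simp [mu1, mu2, Finsupp.single_apply]
  have hz : lam (q * X 2 ^ 2) = 0 := by
    rw [X_pow_eq_monomial]
    refine lam_mul_monomial_zero ?_ ?_ q 1 <;>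
      · apply not_le_mu 2
        simp [mu1, mu2, Finsupp.single_apply]
  have hy : lam (q * X 1 ^ 2) = coeff (mu1 - Finsupp.single 1 2) q := by
    rw [X_pow_eq_monomial, lam_apply, coeff_mul_monomial', coeff_mul_monomial']
    rw [if_pos, if_neg, mul_one, sub_zero]
    · apply not_le_mu 1; simp [mu2, Finsupp.single_apply]
    · rw [Finsupp.single_le_iff]; simp [mu1, Finsupp.single_apply]
  have hw : lam (q * X 3 ^ 2) = -coeff (mu2 - Finsupp.single 3 2) q := by
    rw [X_pow_eq_monomial, lam_apply, coeff_mul_monomial', coeff_mul_monomial',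
      if_neg (not_le_mu 3 (by simp [mu1, Finsupp.single_apply]) : ¬ _ ≤ mu1),
      if_pos (Finsupp.single_le_iff.2 (by simp [mu2, Finsupp.single_apply])), mul_one, zero_sub]
  have hnu : mu1 - Finsupp.single 1 2 = mu2 - Finsupp.single 3 2 := by
    ext j
    fin_cases j <;> simp [mu1, mu2, Finsupp.single_apply]
  rw [fpoly, mul_add, mul_add, mul_add, map_add, map_add, map_add, hx, hz, hy, hw, hnu]
  ring

lemma Jfull_le_lamKer : Jfull ≤ lamKer := by
  rw [Jfull, WindleIdeal]
  apply sup_le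
  · rw [Ideal.span_le]
    intro p hp
    simp only [Set.mem_insert_iff, Set.mem_singleton_iff] at hp
    have hmono : ∀ s : Fin 5 →₀ ℕ, ¬ s ≤ mu1 → ¬ s ≤ mu2 → monomial s (1:ℚ) ∈ lamKer := by
      intro s h1 h2 q
      exact lam_mul_monomial_zero h1 h2 q 1
    rcases hp with rfl|rfl|rfl|rfl|rfl|rfl|rfl|rfl|rfl|rfl
    · rw [SetLike.mem_coe, X_pow_eq_monomial]
      exact hmono _ (not_le_mu 0 (by simp [mu1, Finsupp.single_apply]))
        (not_le_mu 0 (by simp [mu2, Finsupp.single_apply]))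
    · rw [SetLike.mem_coe, X_pow_eq_monomial]
      exact hmono _ (not_le_mu 1 (by simp [mu1, Finsupp.single_apply]))
        (not_le_mu 1 (by simp [mu2, Finsupp.single_apply]))
    · rw [SetLike.mem_coe, X_pow_eq_monomial]
      exact hmono _ (not_le_mu 3 (by simp [mu1, Finsupp.single_apply]))
        (not_le_mu 3 (by simp [mu2, Finsupp.single_apply]))
    · rw [SetLike.mem_coe, X_pow_eq_monomial]
      exact hmono _ (not_le_mu 2 (by simp [mu1, Finsupp.single_apply]))
        (not_le_mu 2 (by simp [mu2, Finsupp.single_apply]))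
    · rw [SetLike.mem_coe, X_pow_eq_monomial, X_pow_eq_monomial, monomial_mul, one_mul]
      exact hmono _ (not_le_mu 0 (by simp [mu1, Finsupp.single_apply]))
        (not_le_mu 0 (by simp [mu2, Finsupp.single_apply]))
    · rw [SetLike.mem_coe, X_pow_eq_monomial, X_pow_eq_monomial, monomial_mul, one_mul]
      exact hmono _ (not_le_mu 3 (by simp [mu1, Finsupp.single_apply]))
        (not_le_mu 1 (by simp [mu2, Finsupp.single_apply]))
    · rw [SetLike.mem_coe, X_pow_eq_monomial, X_pow_eq_monomial, monomial_mul, one_mul]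
      exact hmono _ (not_le_mu 2 (by simp [mu1, Finsupp.single_apply]))
        (not_le_mu 2 (by simp [mu2, Finsupp.single_apply]))
    · rw [SetLike.mem_coe, show (X 0 * X 4 : P5) = monomial (Finsupp.single 0 1 + Finsupp.single 4 1) 1 by
        rw [← pow_one (X (0:Fin 5)), ← pow_one (X (4:Fin 5)), X_pow_eq_monomial, X_pow_eq_monomial, monomial_mul, one_mul]]
      exact hmono _ (not_le_mu 4 (by simp [mu1, Finsupp.single_apply]))
        (not_le_mu 4 (by simp [mu2, Finsupp.single_apply]))
    · rw [SetLike.mem_coe, show (X 2 * X 4 : P5) = monomial (Finsupp.single 2 1 + Finsupp.single 4 1) 1 by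
        rw [← pow_one (X (2:Fin 5)), ← pow_one (X (4:Fin 5)), X_pow_eq_monomial, X_pow_eq_monomial, monomial_mul, one_mul]]
      exact hmono _ (not_le_mu 4 (by simp [mu1, Finsupp.single_apply]))
        (not_le_mu 4 (by simp [mu2, Finsupp.single_apply]))
    · rw [SetLike.mem_coe, show (X 3 * X 4 : P5) = monomial (Finsupp.single 3 1 + Finsupp.single 4 1) 1 by
        rw [← pow_one (X (3:Fin 5)), ← pow_one (X (4:Fin 5)), X_pow_eq_monomial, X_pow_eq_monomial, monomial_mul, one_mul]]
      exact hmono _ (not_le_mu 4 (by simp [mu1, Finsupp.single_apply]))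
        (not_le_mu 4 (by simp [mu2, Finsupp.single_apply]))
  · rw [Ideal.span_le, Set.singleton_subset_iff]
    exact gen_f_mem

lemma lam_vanish {p : P5} (hp : p ∈ Jfull) : lam p = 0 := by
  have := Jfull_le_lamKer hp 1
  rwa [one_mul] at this

/-! ### membership identities -/

lemma W_mem {p : P5} (hp : p ∈ ({X 0 ^ 4, X 1 ^ 4, X 3 ^ 4, X 2 ^ 4, X 0 ^ 2 * X 1 ^ 2,
    X 1 ^ 2 * X 3 ^ 2, X 2 ^ 2 * X 3 ^ 2, X 0 * X 4, X 2 * X 4, X 3 * X 4} : Set P5)) :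
    p ∈ Jfull :=
  Ideal.mem_sup_left (Ideal.subset_span hp)

lemma f_mem : fpoly ∈ Jfull := Ideal.mem_sup_right (Ideal.subset_span rfl)

lemma wmem0 : (X 0 ^ 4 : P5) ∈ Jfull := W_mem (Or.inl rfl)
lemma wmem1 : (X 1 ^ 4 : P5) ∈ Jfull := W_mem (Or.inr (Or.inl rfl))
lemma wmem2 : (X 3 ^ 4 : P5) ∈ Jfull := W_mem (Or.inr (Or.inr (Or.inl rfl)))
lemma wmem3 : (X 2 ^ 4 : P5) ∈ Jfull := W_mem (Or.inr (Or.inr (Or.inr (Or.inl rfl))))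
lemma wmem4 : (X 0 ^ 2 * X 1 ^ 2 : P5) ∈ Jfull := W_mem (Or.inr (Or.inr (Or.inr (Or.inr (Or.inl rfl)))))
lemma wmem5 : (X 1 ^ 2 * X 3 ^ 2 : P5) ∈ Jfull := W_mem (Or.inr (Or.inr (Or.inr (Or.inr (Or.inr (Or.inl rfl))))))
lemma wmem6 : (X 2 ^ 2 * X 3 ^ 2 : P5) ∈ Jfull := W_mem (Or.inr (Or.inr (Or.inr (Or.inr (Or.inr (Or.inr (Or.inl rfl)))))))
lemma wmem7 : (X 0 * X 4 : P5) ∈ Jfull := W_mem (Or.inr (Or.inr (Or.inr (Or.inr (Or.inr (Or.inr (Or.inr (Or.inl rfl))))))))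
lemma wmem8 : (X 2 * X 4 : P5) ∈ Jfull := W_mem (Or.inr (Or.inr (Or.inr (Or.inr (Or.inr (Or.inr (Or.inr (Or.inr (Or.inl rfl)))))))))
lemma wmem9 : (X 3 * X 4 : P5) ∈ Jfull := W_mem (Or.inr (Or.inr (Or.inr (Or.inr (Or.inr (Or.inr (Or.inr (Or.inr (Or.inr (rfl))))))))))

lemma tg_mem : (X 4 : P5) * gpoly ∈ Jfull := by
  have h : (X 4 : P5) * gpoly =
      (-2 * X 2) * (X 2 * X 4) + (-2 * X 3) * (X 3 * X 4) + X 4 * fpoly := by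
    rw [gpoly, fpoly]; ring
  rw [h]
  exact Ideal.add_mem _ (Ideal.add_mem _
    (Ideal.mul_mem_left _ _ wmem8)
    (Ideal.mul_mem_left _ _ wmem9))
    (Ideal.mul_mem_left _ _ f_mem)

lemma y2g_mem : (X 1 ^ 2 : P5) * gpoly ∈ Jfull := by
  have h : (X 1 ^ 2 : P5) * gpoly =
      (-(X 1 ^ 2)) * fpoly + 2 * (X 0 ^ 2 * X 1 ^ 2) + 2 * (X 1 ^ 4) := by
    rw [gpoly, fpoly]; ring
  rw [h]
  exact Ideal.add_mem _ (Ideal.add_mem _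
    (Ideal.mul_mem_left _ _ f_mem)
    (Ideal.mul_mem_left _ _ wmem4))
    (Ideal.mul_mem_left _ _ wmem1)

lemma z2g_mem : (X 2 ^ 2 : P5) * gpoly ∈ Jfull := by
  have h : (X 2 ^ 2 : P5) * gpoly =
      (X 2 ^ 2) * fpoly + (-2) * (X 2 ^ 4) + (-2) * (X 2 ^ 2 * X 3 ^ 2) := by
    rw [gpoly, fpoly]; ring
  rw [h]
  exact Ideal.add_mem _ (Ideal.add_mem _
    (Ideal.mul_mem_left _ _ f_mem)
    (Ideal.mul_mem_left _ _ wmem3))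
    (Ideal.mul_mem_left _ _ wmem6)

lemma w2g_mem : (X 3 ^ 2 : P5) * gpoly ∈ Jfull := by
  have h : (X 3 ^ 2 : P5) * gpoly =
      (X 3 ^ 2) * fpoly + (-2) * (X 2 ^ 2 * X 3 ^ 2) + (-2) * (X 3 ^ 4) := by
    rw [gpoly, fpoly]; ring
  rw [h]
  exact Ideal.add_mem _ (Ideal.add_mem _
    (Ideal.mul_mem_left _ _ f_mem)
    (Ideal.mul_mem_left _ _ wmem6))
    (Ideal.mul_mem_left _ _ wmem2)

lemma fg_mem : fpoly * gpoly ∈ Jfull := Ideal.mul_mem_right _ _ f_mem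

lemma x2g_mem : (X 0 ^ 2 : P5) * gpoly ∈ Jfull := by
  have h : (X 0 ^ 2 : P5) * gpoly =
      fpoly * gpoly - X 1 ^ 2 * gpoly - X 2 ^ 2 * gpoly - X 3 ^ 2 * gpoly := by
    rw [gpoly, fpoly]; ring
  rw [h]
  exact Ideal.sub_mem _ (Ideal.sub_mem _ (Ideal.sub_mem _ fg_mem y2g_mem) z2g_mem) w2g_mem

/-! ### the ideal K and its colon property -/

noncomputable def K : Ideal P5 :=
  Ideal.span {X 0 ^ 4, X 1 ^ 4, X 3 ^ 4, X 2 ^ 4, X 0 ^ 2 * X 1 ^ 2,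
    X 1 ^ 2 * X 3 ^ 2, X 2 ^ 2 * X 3 ^ 2, X 0 * X 4, X 2 * X 4, X 3 * X 4,
    fpoly, X 4, X 0 ^ 2, X 1 ^ 2, X 2 ^ 2, X 3 ^ 2}

lemma K_le_colon : K ≤ Jfull.colon (Ideal.span {gpoly}) := by
  rw [K, Ideal.span_le]
  intro p hp
  rw [SetLike.mem_coe, Ideal.mem_colon_span_singleton]
  simp only [Set.mem_insert_iff, Set.mem_singleton_iff] at hp
  rcases hp with rfl|rfl|rfl|rfl|rfl|rfl|rfl|rfl|rfl|rfl|rfl|rfl|rfl|rfl|rfl|rfl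
  · exact Ideal.mul_mem_right _ _ wmem0
  · exact Ideal.mul_mem_right _ _ wmem1
  · exact Ideal.mul_mem_right _ _ wmem2
  · exact Ideal.mul_mem_right _ _ wmem3
  · exact Ideal.mul_mem_right _ _ wmem4
  · exact Ideal.mul_mem_right _ _ wmem5
  · exact Ideal.mul_mem_right _ _ wmem6
  · exact Ideal.mul_mem_right _ _ wmem7
  · exact Ideal.mul_mem_right _ _ wmem8
  · exact Ideal.mul_mem_right _ _ wmem9
  · exact fg_mem
  · exact tg_mem
  · exact x2g_mem
  · exact y2g_mem
  · exact z2g_mem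
  · exact w2g_mem

lemma mul_g_mem_of_mem_K {p : P5} (hp : p ∈ K) : p * gpoly ∈ Jfull :=
  Ideal.mem_colon_span_singleton.1 (K_le_colon hp)

/-! ### square-free monomials -/

def bnum (b : Bool) : ℕ := if b then 1 else 0

noncomputable def eb (b : Fin 4 → Bool) : Fin 5 →₀ ℕ :=
  Finsupp.single 0 (bnum (b 0)) + Finsupp.single 1 (bnum (b 1)) +
  Finsupp.single 2 (bnum (b 2)) + Finsupp.single 3 (bnum (b 3))

noncomputable def msf (b : Fin 4 → Bool) : P5 := monomial (eb b) 1

@[simp] lemma eb_apply0 (b : Fin 4 → Bool) : eb b 0 = bnum (b 0) := by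
  simp [eb, Finsupp.single_apply]
@[simp] lemma eb_apply1 (b : Fin 4 → Bool) : eb b 1 = bnum (b 1) := by
  simp [eb, Finsupp.single_apply]
@[simp] lemma eb_apply2 (b : Fin 4 → Bool) : eb b 2 = bnum (b 2) := by
  simp [eb, Finsupp.single_apply]
@[simp] lemma eb_apply3 (b : Fin 4 → Bool) : eb b 3 = bnum (b 3) := by
  simp [eb, Finsupp.single_apply]
@[simp] lemma eb_apply4 (b : Fin 4 → Bool) : eb b 4 = 0 := by
  simp [eb, Finsupp.single_apply]

noncomputable def Msub : Submodule ℚ P5 :=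
  Submodule.span ℚ ((K : Set P5) ∪ Set.range msf)

lemma monomial_mem_K {e : Fin 5 →₀ ℕ} {i : Fin 5} {n : ℕ}
    (hX : (X i : P5) ^ n ∈ K) (hle : Finsupp.single i n ≤ e) : monomial e (1:ℚ) ∈ K := by
  have h : monomial e (1:ℚ) = monomial (e - Finsupp.single i n) 1 * X i ^ n := by
    rw [X_pow_eq_monomial, monomial_mul, mul_one, tsub_add_cancel_of_le hle]
  rw [h]
  exact Ideal.mul_mem_left _ _ hX

lemma kmem (p : P5)
    (hp : p ∈ ({X 0 ^ 4, X 1 ^ 4, X 3 ^ 4, X 2 ^ 4, X 0 ^ 2 * X 1 ^ 2,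
      X 1 ^ 2 * X 3 ^ 2, X 2 ^ 2 * X 3 ^ 2, X 0 * X 4, X 2 * X 4, X 3 * X 4,
      fpoly, X 4, X 0 ^ 2, X 1 ^ 2, X 2 ^ 2, X 3 ^ 2} : Set P5)) : p ∈ K :=
  Ideal.subset_span hp

lemma kx2 : (X 0 ^ 2 : P5) ∈ K := kmem _ (Or.inr (Or.inr (Or.inr (Or.inr (Or.inr (Or.inr
  (Or.inr (Or.inr (Or.inr (Or.inr (Or.inr (Or.inr (Or.inl rfl)))))))))))))
lemma ky2 : (X 1 ^ 2 : P5) ∈ K := kmem _ (Or.inr (Or.inr (Or.inr (Or.inr (Or.inr (Or.inr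
  (Or.inr (Or.inr (Or.inr (Or.inr (Or.inr (Or.inr (Or.inr (Or.inl rfl))))))))))))))
lemma kz2 : (X 2 ^ 2 : P5) ∈ K := kmem _ (Or.inr (Or.inr (Or.inr (Or.inr (Or.inr (Or.inr
  (Or.inr (Or.inr (Or.inr (Or.inr (Or.inr (Or.inr (Or.inr (Or.inr (Or.inl rfl)))))))))))))))
lemma kw2 : (X 3 ^ 2 : P5) ∈ K := kmem _ (Or.inr (Or.inr (Or.inr (Or.inr (Or.inr (Or.inr
  (Or.inr (Or.inr (Or.inr (Or.inr (Or.inr (Or.inr (Or.inr (Or.inr (Or.inr rfl)))))))))))))))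
lemma kt : (X 4 : P5) ∈ K := kmem _ (Or.inr (Or.inr (Or.inr (Or.inr (Or.inr (Or.inr
  (Or.inr (Or.inr (Or.inr (Or.inr (Or.inr (Or.inl rfl))))))))))))
lemma kf : fpoly ∈ K := kmem _ (Or.inr (Or.inr (Or.inr (Or.inr (Or.inr (Or.inr
  (Or.inr (Or.inr (Or.inr (Or.inr (Or.inl rfl)))))))))))

lemma ksq : ∀ i : Fin 4, (X i.castSucc : P5) ^ 2 ∈ K := by
  intro i
  fin_cases i
  · exact kx2
  · exact ky2
  · exact kz2
  · exact kw2

lemma msf_mul_X (b : Fin 4 → Bool) (i : Fin 5) :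
    msf b * X i = monomial (eb b + Finsupp.single i 1) 1 := by
  rw [msf, ← pow_one (X i), X_pow_eq_monomial, monomial_mul, mul_one]

lemma msf_mul_X0_mem (b : Fin 4 → Bool) : msf b * X (0:Fin 5) ∈ Msub := by
  rw [msf_mul_X]
  by_cases hb : b 0 = true
  · refine Submodule.subset_span (Or.inl (monomial_mem_K kx2 ?_))
    rw [Finsupp.single_le_iff, Finsupp.add_apply, eb_apply0, Finsupp.single_apply]
    simp [hb, bnum]
  · have hupd : eb b + Finsupp.single (0:Fin 5) 1 = eb (Function.update b 0 true) := by
      ext j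
      rw [Finsupp.add_apply, Finsupp.single_apply]
      fin_cases j <;> simp_all [bnum, Function.update]
    rw [hupd]
    exact Submodule.subset_span (Or.inr ⟨_, rfl⟩)

lemma msf_mul_X1_mem (b : Fin 4 → Bool) : msf b * X (1:Fin 5) ∈ Msub := by
  rw [msf_mul_X]
  by_cases hb : b 1 = true
  · refine Submodule.subset_span (Or.inl (monomial_mem_K ky2 ?_))
    rw [Finsupp.single_le_iff, Finsupp.add_apply, eb_apply1, Finsupp.single_apply]
    simp [hb, bnum]
  · have hupd : eb b + Finsupp.single (1:Fin 5) 1 = eb (Function.update b 1 true) := by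
      ext j
      rw [Finsupp.add_apply, Finsupp.single_apply]
      fin_cases j <;> simp_all [bnum, Function.update]
    rw [hupd]
    exact Submodule.subset_span (Or.inr ⟨_, rfl⟩)

lemma msf_mul_X2_mem (b : Fin 4 → Bool) : msf b * X (2:Fin 5) ∈ Msub := by
  rw [msf_mul_X]
  by_cases hb : b 2 = true
  · refine Submodule.subset_span (Or.inl (monomial_mem_K kz2 ?_))
    rw [Finsupp.single_le_iff, Finsupp.add_apply, eb_apply2, Finsupp.single_apply]
    simp [hb, bnum]
  · have hupd : eb b + Finsupp.single (2:Fin 5) 1 = eb (Function.update b 2 true) := by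
      ext j
      rw [Finsupp.add_apply, Finsupp.single_apply]
      fin_cases j <;> simp_all [bnum, Function.update]
    rw [hupd]
    exact Submodule.subset_span (Or.inr ⟨_, rfl⟩)

lemma msf_mul_X3_mem (b : Fin 4 → Bool) : msf b * X (3:Fin 5) ∈ Msub := by
  rw [msf_mul_X]
  by_cases hb : b 3 = true
  · refine Submodule.subset_span (Or.inl (monomial_mem_K kw2 ?_))
    rw [Finsupp.single_le_iff, Finsupp.add_apply, eb_apply3, Finsupp.single_apply]
    simp [hb, bnum]
  · have hupd : eb b + Finsupp.single (3:Fin 5) 1 = eb (Function.update b 3 true) := by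
      ext j
      rw [Finsupp.add_apply, Finsupp.single_apply]
      fin_cases j <;> simp_all [bnum, Function.update]
    rw [hupd]
    exact Submodule.subset_span (Or.inr ⟨_, rfl⟩)

lemma msf_mul_X4_mem (b : Fin 4 → Bool) : msf b * X (4:Fin 5) ∈ Msub := by
  rw [msf_mul_X]
  refine Submodule.subset_span (Or.inl (monomial_mem_K (n := 1) (by rw [pow_one]; exact kt) ?_))
  rw [Finsupp.single_le_iff, Finsupp.add_apply, eb_apply4, Finsupp.single_apply]
  simp

lemma msf_mul_X_mem (b : Fin 4 → Bool) (i : Fin 5) : msf b * X i ∈ Msub := by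
  fin_cases i
  · exact msf_mul_X0_mem b
  · exact msf_mul_X1_mem b
  · exact msf_mul_X2_mem b
  · exact msf_mul_X3_mem b
  · exact msf_mul_X4_mem b

lemma mulX_mem {p : P5} (hp : p ∈ Msub) (i : Fin 5) : p * X i ∈ Msub := by
  induction hp using Submodule.span_induction with
  | mem x hx =>
    rcases hx with hK | ⟨b, rfl⟩
    · exact Submodule.subset_span (Or.inl (Ideal.mul_mem_right _ _ hK))
    · exact msf_mul_X_mem b i
  | zero => rw [zero_mul]; exact zero_mem _
  | add x y _ _ hx hy => rw [add_mul]; exact add_mem hx hy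
  | smul c x _ hx => rw [smul_mul_assoc]; exact Submodule.smul_mem _ _ hx

lemma one_mem_Msub : (1 : P5) ∈ Msub := by
  have h1 : (1 : P5) = msf (fun _ => false) := by
    have h0 : eb (fun _ => false) = 0 := by
      ext j; fin_cases j <;> simp [bnum]
    rw [msf, h0]
    simp
  rw [h1]
  exact Submodule.subset_span (Or.inr ⟨_, rfl⟩)

lemma mem_Msub (p : P5) : p ∈ Msub := by
  induction p using MvPolynomial.induction_on with
  | C a =>
    have : (C a : P5) = a • 1 := by
      rw [MvPolynomial.smul_eq_C_mul, mul_one]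
    rw [this]
    exact Submodule.smul_mem _ _ one_mem_Msub
  | add p q hp hq => exact add_mem hp hq
  | mul_X p i hp => exact mulX_mem hp i

/-! ### the key pairing computation -/

lemma msf_mul_msf (a b : Fin 4 → Bool) : msf a * msf b = monomial (eb a + eb b) 1 := by
  rw [msf, msf, monomial_mul, one_mul]

lemma monomial_mul_g (s : Fin 5 →₀ ℕ) :
    (monomial s (1:ℚ)) * gpoly =
      monomial (s + Finsupp.single 0 2) 1 + monomial (s + Finsupp.single 1 2) 1
      - monomial (s + Finsupp.single 2 2) 1 - monomial (s + Finsupp.single 3 2) 1 := by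
  rw [gpoly, X_pow_eq_monomial, X_pow_eq_monomial, X_pow_eq_monomial, X_pow_eq_monomial]
  rw [mul_sub, mul_sub, mul_add, monomial_mul, monomial_mul, monomial_mul, monomial_mul]
  rw [mul_one]

lemma ne_of_even {e : Fin 5 →₀ ℕ} (j k : Fin 5) (h0 : e j = 0) {t : Fin 5 →₀ ℕ}
    (ht : t j ≠ 0 ∧ t j ≠ 2) : e + Finsupp.single k 2 ≠ t := by
  intro heq
  have h := congrArg (fun u : Fin 5 →₀ ℕ => u j) heq
  simp only [Finsupp.add_apply, h0, Finsupp.single_apply, zero_add] at h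
  split_ifs at h
  · exact ht.2 h.symm
  · exact ht.1 h.symm

lemma lam_msf_g_zero_aux (β : Fin 4 → Bool) (j : Fin 5) (h0 : eb β j = 0)
    (hm1 : mu1 j ≠ 0 ∧ mu1 j ≠ 2) (hm2 : mu2 j ≠ 0 ∧ mu2 j ≠ 2) :
    lam (msf β * gpoly) = 0 := by
  have hz : ∀ k : Fin 5, lam (monomial (eb β + Finsupp.single k 2) (1:ℚ)) = 0 := fun k =>
    lam_monomial_eq_zero (ne_of_even j k h0 hm1) (ne_of_even j k h0 hm2) _
  rw [msf, monomial_mul_g, map_sub, map_sub, map_add, hz 0, hz 1, hz 2, hz 3]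
  ring

lemma lam_msf_g_zero (β : Fin 4 → Bool) (i : Fin 4) (hβ : β i = false) :
    lam (msf β * gpoly) = 0 := by
  fin_cases i
  · exact lam_msf_g_zero_aux β 0 (by simp [show β 0 = false from hβ, bnum])
      (by constructor <;> simp [mu1, Finsupp.single_apply])
      (by constructor <;> simp [mu2, Finsupp.single_apply])
  · exact lam_msf_g_zero_aux β 1 (by simp [show β 1 = false from hβ, bnum])
      (by constructor <;> simp [mu1, Finsupp.single_apply])
      (by constructor <;> simp [mu2, Finsupp.single_apply])
  · exact lam_msf_g_zero_aux β 2 (by simp [show β 2 = false from hβ, bnum])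
      (by constructor <;> simp [mu1, Finsupp.single_apply])
      (by constructor <;> simp [mu2, Finsupp.single_apply])
  · exact lam_msf_g_zero_aux β 3 (by simp [show β 3 = false from hβ, bnum])
      (by constructor <;> simp [mu1, Finsupp.single_apply])
      (by constructor <;> simp [mu2, Finsupp.single_apply])

lemma lam_full : lam (msf (fun _ => true) * gpoly) = 2 := by
  have hfull : eb (fun _ => true) = Finsupp.single 0 1 + Finsupp.single 1 1 +
      Finsupp.single 2 1 + Finsupp.single 3 1 := by
    ext j
    fin_cases j <;> simp [eb, bnum, Finsupp.single_apply]
  rw [msf, monomial_mul_g, map_sub, map_sub, map_add]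
  have e0 : eb (fun _ => true) + Finsupp.single 0 2 ≠ mu1 := by
    intro h
    have := congrArg (fun u : Fin 5 →₀ ℕ => u 0) h
    simp [hfull, mu1, Finsupp.single_apply] at this
  have e0' : eb (fun _ => true) + Finsupp.single 0 2 ≠ mu2 := by
    intro h
    have := congrArg (fun u : Fin 5 →₀ ℕ => u 0) h
    simp [hfull, mu2, Finsupp.single_apply] at this
  have e1 : eb (fun _ => true) + Finsupp.single 1 2 = mu1 := by
    ext j
    fin_cases j <;> simp [hfull, mu1, Finsupp.single_apply]
  have e1' : eb (fun _ => true) + Finsupp.single 1 2 ≠ mu2 := by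
    intro h
    have := congrArg (fun u : Fin 5 →₀ ℕ => u 1) h
    simp [hfull, mu2, Finsupp.single_apply] at this
  have e2 : eb (fun _ => true) + Finsupp.single 2 2 ≠ mu1 := by
    intro h
    have := congrArg (fun u : Fin 5 →₀ ℕ => u 2) h
    simp [hfull, mu1, Finsupp.single_apply] at this
  have e2' : eb (fun _ => true) + Finsupp.single 2 2 ≠ mu2 := by
    intro h
    have := congrArg (fun u : Fin 5 →₀ ℕ => u 2) h
    simp [hfull, mu2, Finsupp.single_apply] at this
  have e3 : eb (fun _ => true) + Finsupp.single 3 2 ≠ mu1 := by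
    intro h
    have := congrArg (fun u : Fin 5 →₀ ℕ => u 3) h
    simp [hfull, mu1, Finsupp.single_apply] at this
  have e3' : eb (fun _ => true) + Finsupp.single 3 2 = mu2 := by
    ext j
    fin_cases j <;> simp [hfull, mu2, Finsupp.single_apply]
  rw [lam_monomial_eq_zero e0 e0', lam_monomial_eq_zero e2 e2']
  rw [lam_monomial, if_pos e1, if_neg e1', lam_monomial, if_neg e3, if_pos e3']
  norm_num

noncomputable def cpl (b : Fin 4 → Bool) : Fin 4 → Bool := fun i => !(b i)

lemma monomial_g_mem_Jfull {e : Fin 5 →₀ ℕ} {j : Fin 5}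
    (hsq : (X j : P5) ^ 2 * gpoly ∈ Jfull) (hle : Finsupp.single j 2 ≤ e) :
    monomial e (1:ℚ) * gpoly ∈ Jfull := by
  have h : monomial e (1:ℚ) * gpoly = monomial (e - Finsupp.single j 2) 1 * ((X j) ^ 2 * gpoly) := by
    rw [← mul_assoc, X_pow_eq_monomial, monomial_mul, mul_one, tsub_add_cancel_of_le hle]
  rw [h]
  exact Ideal.mul_mem_left _ _ hsq

lemma sq_g_mem : ∀ i : Fin 4, (X i.castSucc : P5) ^ 2 * gpoly ∈ Jfull := by
  intro i
  fin_cases i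
  · exact x2g_mem
  · exact y2g_mem
  · exact z2g_mem
  · exact w2g_mem

lemma keyT (b b' : Fin 4 → Bool) :
    lam (msf (cpl b) * msf b' * gpoly) = if b' = b then 2 else 0 := by
  by_cases hov : ∃ i, b' i = true ∧ b i = false
  · obtain ⟨i, h1, h2⟩ := hov
    rw [if_neg (by intro h; rw [h] at h1; rw [h1] at h2; cases h2)]
    rw [msf_mul_msf]
    apply lam_vanish
    have key : ∀ j : Fin 5, (X j : P5) ^ 2 * gpoly ∈ Jfull → eb (cpl b) j = 1 →
        eb b' j = 1 → monomial (eb (cpl b) + eb b') (1:ℚ) * gpoly ∈ Jfull := by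
      intro j hsq hcj hcj'
      apply monomial_g_mem_Jfull hsq
      rw [Finsupp.single_le_iff, Finsupp.add_apply, hcj, hcj']
    fin_cases i
    · exact key 0 x2g_mem (by rw [eb_apply0]; simp [cpl, show b 0 = false from h2, bnum])
        (by rw [eb_apply0]; simp [show b' 0 = true from h1, bnum])
    · exact key 1 y2g_mem (by rw [eb_apply1]; simp [cpl, show b 1 = false from h2, bnum])
        (by rw [eb_apply1]; simp [show b' 1 = true from h1, bnum])
    · exact key 2 z2g_mem (by rw [eb_apply2]; simp [cpl, show b 2 = false from h2, bnum])
        (by rw [eb_apply2]; simp [show b' 2 = true from h1, bnum])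
    · exact key 3 w2g_mem (by rw [eb_apply3]; simp [cpl, show b 3 = false from h2, bnum])
        (by rw [eb_apply3]; simp [show b' 3 = true from h1, bnum])
  · push_neg at hov
    have hov' : ∀ i, b' i = true → b i = true := by
      intro i h
      have := hov i h
      simpa using this
    have hbnum : ∀ (x y : Bool), (y = true → x = true) →
        bnum (!x) + bnum y = bnum (!x || y) := by
      intro x y h
      revert h
      cases x <;> cases y <;> decide
    have hsum : eb (cpl b) + eb b' = eb (fun i => !(b i) || b' i) := by
      ext j
      rw [Finsupp.add_apply]
      fin_cases j
      · show eb (cpl b) 0 + eb b' 0 = eb (fun i => !(b i) || b' i) 0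
        rw [eb_apply0, eb_apply0, eb_apply0]
        exact hbnum _ _ (hov' 0)
      · show eb (cpl b) 1 + eb b' 1 = eb (fun i => !(b i) || b' i) 1
        rw [eb_apply1, eb_apply1, eb_apply1]
        exact hbnum _ _ (hov' 1)
      · show eb (cpl b) 2 + eb b' 2 = eb (fun i => !(b i) || b' i) 2
        rw [eb_apply2, eb_apply2, eb_apply2]
        exact hbnum _ _ (hov' 2)
      · show eb (cpl b) 3 + eb b' 3 = eb (fun i => !(b i) || b' i) 3
        rw [eb_apply3, eb_apply3, eb_apply3]
        exact hbnum _ _ (hov' 3)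
      · show eb (cpl b) 4 + eb b' 4 = eb (fun i => !(b i) || b' i) 4
        rw [eb_apply4, eb_apply4, eb_apply4]
    have hre : msf (cpl b) * msf b' = msf (fun i => !(b i) || b' i) := by
      rw [msf_mul_msf, hsum]
      rfl
    rw [hre]
    by_cases heq : b' = b
    · rw [if_pos heq]
      have hT : (fun i => !(b i) || b' i) = (fun _ => true) := by
        funext i
        rw [heq]
        simp
      rw [hT, lam_full]
    · rw [if_neg heq]
      have hex : ∃ i, b i = true ∧ b' i = false := by
        by_contra hno
        push_neg at hno
        apply heq
        funext i
        cases hbi : b' i with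
        | true => rw [hov' i hbi]
        | false =>
          cases hbi2 : b i with
          | false => rfl
          | true =>
            have hcon := hno i hbi2
            rw [hbi] at hcon
            exact absurd rfl hcon
      obtain ⟨i, hbi, hbi'⟩ := hex
      exact lam_msf_g_zero _ i (by simp [hbi, hbi'])

lemma windleMk_add (p q : P5) : windleMk (p + q) = windleMk p + windleMk q := by
  simp [windleMk, map_add]

lemma windleMk_K_mem {p : P5} (hp : p ∈ K) :
    windleMk p ∈ Ideal.span {windleMk (X 4), windleMk (X 1 ^ 2), windleMk (X 2 ^ 2),
      windleMk (X 3 ^ 2)} := by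
  induction hp using Submodule.span_induction with
  | mem x hx =>
    have h0 : ∀ y : P5, y ∈ Jfull → windleMk y ∈ Ideal.span {windleMk (X 4),
        windleMk (X 1 ^ 2), windleMk (X 2 ^ 2), windleMk (X 3 ^ 2)} := by
      intro y hy
      rw [(windleMk_zero_iff y).2 hy]
      exact zero_mem _
    rcases hx with rfl|rfl|rfl|rfl|rfl|rfl|rfl|rfl|rfl|rfl|rfl|rfl|rfl|rfl|rfl|rfl
    · exact h0 _ wmem0
    · exact h0 _ wmem1
    · exact h0 _ wmem2
    · exact h0 _ wmem3
    · exact h0 _ wmem4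
    · exact h0 _ wmem5
    · exact h0 _ wmem6
    · exact h0 _ wmem7
    · exact h0 _ wmem8
    · exact h0 _ wmem9
    · exact h0 _ f_mem
    · exact Ideal.subset_span (Or.inl rfl)
    · have hx2 : windleMk (X 0 ^ 2) = windleMk fpoly - windleMk (X 1 ^ 2)
          - windleMk (X 2 ^ 2) - windleMk (X 3 ^ 2) := by
        rw [windleMk_sub, windleMk_sub, windleMk_sub]
        congr 1
        rw [fpoly]
        ring
      rw [hx2, (windleMk_zero_iff fpoly).2 f_mem]
      exact sub_mem (sub_mem (sub_mem (zero_mem _)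
        (Ideal.subset_span (Or.inr (Or.inl rfl))))
        (Ideal.subset_span (Or.inr (Or.inr (Or.inl rfl)))))
        (Ideal.subset_span (Or.inr (Or.inr (Or.inr rfl))))
    · exact Ideal.subset_span (Or.inr (Or.inl rfl))
    · exact Ideal.subset_span (Or.inr (Or.inr (Or.inl rfl)))
    · exact Ideal.subset_span (Or.inr (Or.inr (Or.inr rfl)))
  | zero => exact zero_mem _
  | add x y _ _ hx hy => rw [windleMk_add]; exact add_mem hx hy
  | smul cc x _ hx =>
    rw [smul_eq_mul, ← windleMk_mul]
    exact Ideal.mul_mem_left _ _ hx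

end WindleAux

open WindleAux in
/-- In `R = S/(x² + y² + z² + w²)`, the annihilator of the image of
`g = x² + y² − z² − w²` equals the ideal `(t, y², z², w²)`. -/
theorem windle_annihilator_g :
    (Ideal.span {windleMk (X 0 ^ 2 + X 1 ^ 2 - X 2 ^ 2 - X 3 ^ 2)} :
        Ideal WindleRingR).annihilator =
      Ideal.span {windleMk (X 4), windleMk (X 1 ^ 2), windleMk (X 2 ^ 2),
        windleMk (X 3 ^ 2)} := by
  apply le_antisymm
  · intro a ha
    obtain ⟨q1, rfl⟩ := Ideal.Quotient.mk_surjective a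
    obtain ⟨p0, rfl⟩ := Ideal.Quotient.mk_surjective q1
    show windleMk p0 ∈ _
    have hag : windleMk p0 * windleMk gpoly = 0 := by
      have h := Submodule.mem_annihilator.1 ha (windleMk gpoly) (Ideal.subset_span rfl)
      rwa [smul_eq_mul] at h
    have hpg : p0 * gpoly ∈ Jfull := by
      rw [← windleMk_zero_iff, ← windleMk_mul]
      exact hag
    have hM := mem_Msub p0
    rw [Msub, Submodule.span_union] at hM
    obtain ⟨k, hk, sp, hs, hks⟩ := Submodule.mem_sup.1 hM
    have hkK : k ∈ K := by
      have hle : Submodule.span ℚ (K : Set P5) ≤ Submodule.restrictScalars ℚ K :=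
        Submodule.span_le.2 fun x hx => hx
      exact hle hk
    obtain ⟨c, hc⟩ := (Submodule.mem_span_range_iff_exists_fun ℚ).1 hs
    have hsg : (∑ b : Fin 4 → Bool, c b • msf b) * gpoly ∈ Jfull := by
      have h1 : (k + sp) * gpoly ∈ Jfull := by rw [hks]; exact hpg
      have h2 : k * gpoly ∈ Jfull := mul_g_mem_of_mem_K hkK
      have h4 := Ideal.sub_mem _ h1 h2
      have h5 : (k + sp) * gpoly - k * gpoly = sp * gpoly := by ring
      rw [h5] at h4
      rw [hc]
      exact h4
    have hcz : ∀ b, c b = 0 := by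
      intro b
      have h0 : lam (msf (cpl b) * ((∑ b' : Fin 4 → Bool, c b' • msf b') * gpoly)) = 0 :=
        lam_vanish (Ideal.mul_mem_left _ _ hsg)
      have hexp : msf (cpl b) * ((∑ b' : Fin 4 → Bool, c b' • msf b') * gpoly)
          = ∑ b' : Fin 4 → Bool, c b' • (msf (cpl b) * msf b' * gpoly) := by
        rw [Finset.sum_mul, Finset.mul_sum]
        apply Finset.sum_congr rfl
        intro b' _
        rw [smul_mul_assoc, mul_smul_comm, mul_assoc]
      rw [hexp, map_sum] at h0
      have heval : ∀ b' : Fin 4 → Bool, lam (c b' • (msf (cpl b) * msf b' * gpoly))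
          = if b' = b then c b' * 2 else 0 := by
        intro b'
        rw [map_smul, keyT]
        split_ifs <;> simp
      rw [Finset.sum_congr rfl (fun b' _ => heval b')] at h0
      rw [Finset.sum_ite_eq' Finset.univ b (fun b' => c b' * 2)] at h0
      simp only [Finset.mem_univ, if_true] at h0
      linarith
    have hs0 : sp = 0 := by
      rw [← hc]
      apply Finset.sum_eq_zero
      intro b _
      rw [hcz b, zero_smul]
    have hfin : windleMk p0 = windleMk k := by rw [← hks, hs0, add_zero]
    rw [hfin]
    exact windleMk_K_mem hkK
  · rw [Ideal.span_le]
    intro x hx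
    have key : ∀ p : P5, p * gpoly ∈ Jfull →
        windleMk p ∈ ((Ideal.span {windleMk (X 0 ^ 2 + X 1 ^ 2 - X 2 ^ 2 - X 3 ^ 2)} :
          Ideal WindleRingR).annihilator : Set WindleRingR) := by
      intro p hp
      rw [SetLike.mem_coe]
      refine (Submodule.mem_annihilator_span_singleton (windleMk (X 0 ^ 2 + X 1 ^ 2 - X 2 ^ 2 - X 3 ^ 2)) (windleMk p)).2 ?_
      rw [smul_eq_mul, windleMk_mul]
      exact (windleMk_zero_iff _).2 hp
    simp only [Set.mem_insert_iff, Set.mem_singleton_iff] at hx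
    rcases hx with rfl|rfl|rfl|rfl
    · exact key _ tg_mem
    · exact key _ y2g_mem
    · exact key _ z2g_mem
    · exact key _ w2g_mem
end
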